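/- arXiv:2511.16608 — 10 statements merged into one kernel-verified Lean document; each statement's English description precedes it below -/
import Mathlib

section
/- Let X and Y be finite ranked posets with rank functions ρ_X and ρ_Y, and let σ : X → Y be an order-preserving, rank-increasing, strongly surjective function. Then every maximal chain y_0 < y_1 < ⋯ < y_s in Y is the image under σ of some maximal chain x_0 < x_1 < ⋯ < x_r in X (i.e. σ({x_0,…,x_r}) = {y_0,…,y_s}) such that r − s = ρ_Y(y_0) − ρ_X(x_0). -/
namespace SFSPaper

variable {α β : Type*}

/-- `ρ` is a rank function: it increases by exactly one along covering relations. -/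
def IsRankFunction [Preorder α] (ρ : α → ℤ) : Prop :=
  ∀ ⦃z z' : α⦄, z ⋖ z' → ρ z' = ρ z + 1

/-- `σ` is rank-increasing with respect to the rank functions `ρX` and `ρY`. -/
def RankIncreasing [Preorder α] [Preorder β] (ρX : α → ℤ) (ρY : β → ℤ) (σ : α → β) : Prop :=
  ∀ x : α, ρX x ≤ ρY (σ x)

/-- `σ` is strongly surjective. -/
def StronglySurjective [Preorder α] [Preorder β] (ρX : α → ℤ) (ρY : β → ℤ) (σ : α → β) : Prop :=
  Function.Surjective σ ∧
    ∀ (x : α) (y : β), σ x ≤ y → ∃ x' : α, x ≤ x' ∧ ρX x' = ρY y ∧ σ x' = y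

/-- The alternating sum `∑_{z ≤ w ≤ z'} (-1)^(ρ w)`. -/
noncomputable def intervalEulerSum [Preorder α] (ρ : α → ℤ) (z z' : α) : ℚ :=
  ∑ᶠ (w : α) (_ : z ≤ w ∧ w ≤ z'), (-1 : ℚ) ^ ρ w

/-- A poset is lower Eulerian with respect to `ρ` if `ρ` is a rank function, there is a
unique minimal (i.e. least) element, and every nontrivial interval has as many elements of even
rank as of odd rank. -/
def LowerEulerian [PartialOrder α] (ρ : α → ℤ) : Prop :=
  IsRankFunction ρ ∧ (∃ b : α, ∀ z : α, b ≤ z) ∧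
    ∀ z z' : α, z < z' → intervalEulerSum ρ z z' = 0

/-- Eulerian: lower Eulerian with a unique maximal element. -/
def Eulerian [PartialOrder α] (ρ : α → ℤ) : Prop :=
  LowerEulerian ρ ∧ ∃ t : α, ∀ z : α, z ≤ t

/-- Strong formal subdivision. -/
def StrongFormalSubdivision [PartialOrder α] [PartialOrder β]
    (ρX : α → ℤ) (ρY : β → ℤ) (σ : α → β) : Prop :=
  Monotone σ ∧ RankIncreasing ρX ρY σ ∧ StronglySurjective ρX ρY σ ∧
    ∀ (x : α) (y : β), σ x ≤ y →
      (∑ᶠ (x' : α) (_ : x ≤ x' ∧ σ x' = y), (-1 : ℚ) ^ (ρY y - ρX x')) = 1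

/-- `q` is join-admissible: every `z` has a join with `q`. -/
def JoinAdmissible [Preorder α] (q : α) : Prop :=
  ∀ z : α, ∃ j : α, IsLeast {w : α | z ≤ w ∧ q ≤ w} j

/-- The rank of a poset: the maximal length of a chain `z_0 < z_1 < ⋯ < z_s`. -/
noncomputable def posetRank (α : Type*) [Preorder α] : ℕ :=
  sSup {n : ℕ | ∃ c : Fin (n + 1) → α, StrictMono c}

/-- A poset is graded if all of its maximal chains have the same length (cardinality). -/
def GradedPoset (α : Type*) [Preorder α] : Prop :=
  ∀ s t : Set α, IsMaxChain (· ≤ ·) s → IsMaxChain (· ≤ ·) t → s.ncard = t.ncard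


lemma rank_lt {α : Type*} [PartialOrder α] [Finite α] {ρ : α → ℤ} (hρ : IsRankFunction ρ)
    {a b : α} (hab : a < b) : ρ a < ρ b := by
  have wf : WellFounded ((· > ·) : α → α → Prop) := wellFounded_gt
  refine WellFounded.induction wf (C := fun a => ∀ b, a < b → ρ a < ρ b) a ?_ b hab
  intro x IH b hxb
  obtain ⟨z, hz, hzb⟩ := exists_covBy_le_of_lt hxb
  rcases hzb.lt_or_eq with h | h
  · have h1 := IH z hz.lt b h
    have h2 := hρ hz; omega
  · subst h; have := hρ hz; omega

lemma covChain_rank {α : Type*} [Preorder α] {ρ : α → ℤ} (hρ : IsRankFunction ρ) (f : ℕ → α) :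
    ∀ n, (∀ i < n, f i ⋖ f (i+1)) → ρ (f n) = ρ (f 0) + n := by
  intro n; induction n with
  | zero => simp
  | succ n IH =>
    intro h
    have h1 := hρ (h n (by omega))
    have h2 := IH (fun i hi => h i (by omega))
    push_cast; omega

lemma covChain_mono {α : Type*} [Preorder α] (f : ℕ → α) (n : ℕ) (h : ∀ i < n, f i ⋖ f (i+1)) :
    ∀ i j, i ≤ j → j ≤ n → f i ≤ f j := by
  intro i j hij
  induction j, hij using Nat.le_induction with
  | base => intro _; exact le_rfl
  | succ j hij IH => intro hjn; exact (IH (by omega)).trans (h j (by omega)).le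

lemma descChain {α : Type*} [PartialOrder α] [Finite α] (x : α) :
    ∃ n, ∃ f : ℕ → α, (∀ i < n, f i ⋖ f (i+1)) ∧ f n = x ∧ IsMin (f 0) := by
  have wf : WellFounded ((· < ·) : α → α → Prop) := wellFounded_lt
  refine WellFounded.induction wf
    (C := fun x => ∃ n, ∃ f : ℕ → α, (∀ i < n, f i ⋖ f (i+1)) ∧ f n = x ∧ IsMin (f 0)) x ?_
  intro x IH
  by_cases hx : IsMin x
  · exact ⟨0, fun _ => x, by omega, rfl, hx⟩
  · obtain ⟨z, hz⟩ := exists_covBy_of_wellFoundedGT hx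
    obtain ⟨n, f, hf, hfn, hf0⟩ := IH z hz.lt
    refine ⟨n+1, fun i => if i ≤ n then f i else x, ?_, ?_, ?_⟩
    · intro i hi
      rcases Nat.lt_or_ge i n with h | h
      · simpa [Nat.le_of_lt h, Nat.succ_le_of_lt h] using hf i h
      · have : i = n := by omega
        subst this
        simpa [hfn] using hz
    · simp
    · simpa using hf0

lemma exists_switch (P : ℕ → Prop) : ∀ n, P 0 → ¬ P n → ∃ i, i < n ∧ P i ∧ ¬ P (i+1) := by
  intro n
  induction n with
  | zero => intro h0 hn; exact absurd h0 hn
  | succ n IH =>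
    intro h0 hn
    by_cases h : P n
    · exact ⟨n, by omega, h, hn⟩
    · obtain ⟨i, hi, h1, h2⟩ := IH h0 h
      exact ⟨i, by omega, h1, h2⟩

open Classical in
noncomputable def liftSeq {X Y : Type*} [Preorder X] [Preorder Y] {ρX : X → ℤ} {ρY : Y → ℤ}
    {σ : X → Y} (hss : StronglySurjective ρX ρY σ) (cc : ℕ → Y) (x0 : X) : ℕ → X
  | 0 => x0
  | (i+1) =>
    if hp : σ (liftSeq hss cc x0 i) ≤ cc (i+1) then
      Classical.choose (hss.2 (liftSeq hss cc x0 i) (cc (i+1)) hp)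
    else liftSeq hss cc x0 i

lemma liftSeq_spec {X Y : Type*} [Preorder X] [Preorder Y] {ρX : X → ℤ} {ρY : Y → ℤ}
    {σ : X → Y} (hss : StronglySurjective ρX ρY σ) (cc : ℕ → Y) (x0 : X)
    (hmono : Monotone cc) (h0 : σ x0 = cc 0) (h0r : ρX x0 = ρY (cc 0)) :
    ∀ i, σ (liftSeq hss cc x0 i) = cc i ∧ ρX (liftSeq hss cc x0 i) = ρY (cc i) ∧
      liftSeq hss cc x0 i ≤ liftSeq hss cc x0 (i+1) := by
  have key : ∀ i, σ (liftSeq hss cc x0 i) = cc i ∧ ρX (liftSeq hss cc x0 i) = ρY (cc i) := by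
    intro i
    induction i with
    | zero => exact ⟨h0, h0r⟩
    | succ i IH =>
      have hp : σ (liftSeq hss cc x0 i) ≤ cc (i+1) := by
        rw [IH.1]; exact hmono (by omega)
      have hspec := Classical.choose_spec (hss.2 (liftSeq hss cc x0 i) (cc (i+1)) hp)
      rw [show liftSeq hss cc x0 (i+1) =
        Classical.choose (hss.2 (liftSeq hss cc x0 i) (cc (i+1)) hp) by
          rw [liftSeq]; simp [hp]]
      exact ⟨hspec.2.2, hspec.2.1⟩
  intro i
  refine ⟨(key i).1, (key i).2, ?_⟩
  have hp : σ (liftSeq hss cc x0 i) ≤ cc (i+1) := by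
    rw [(key i).1]; exact hmono (by omega)
  have hspec := Classical.choose_spec (hss.2 (liftSeq hss cc x0 i) (cc (i+1)) hp)
  rw [show liftSeq hss cc x0 (i+1) =
    Classical.choose (hss.2 (liftSeq hss cc x0 i) (cc (i+1)) hp) by
      rw [liftSeq]; simp [hp]]
  exact hspec.1

/-- Lemma: lifting maximal chains.
Every maximal chain `y_0 < ⋯ < y_s` in `Y` is the image under a strongly surjective,
order-preserving, rank-increasing map `σ` of a maximal chain `x_0 < ⋯ < x_r` in `X`
with `r - s = ρ_Y(y_0) - ρ_X(x_0)`. -/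
theorem liftMaximalChains {X Y : Type*} [PartialOrder X] [PartialOrder Y] [Finite X] [Finite Y]
    (ρX : X → ℤ) (ρY : Y → ℤ) (hρX : IsRankFunction ρX) (hρY : IsRankFunction ρY)
    (σ : X → Y) (hmono : Monotone σ) (hrank : RankIncreasing ρX ρY σ)
    (hss : StronglySurjective ρX ρY σ)
    (s : ℕ) (c : Fin (s + 1) → Y) (hc : StrictMono c)
    (hmax : IsMaxChain (· ≤ ·) (Set.range c)) :
    ∃ (r : ℕ) (d : Fin (r + 1) → X), StrictMono d ∧
      IsMaxChain (· ≤ ·) (Set.range d) ∧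
      σ '' Set.range d = Set.range c ∧
      (r : ℤ) - (s : ℤ) = ρY (c 0) - ρX (d 0) := by
  classical
  -- minimality / maximality of chain ends in Y
  have hminc : IsMin (c 0) := by
    intro z hz
    have hch : IsChain (· ≤ ·) (insert z (Set.range c)) := by
      refine hmax.1.insert ?_
      rintro b ⟨j, rfl⟩ _
      exact Or.inl (hz.trans (hc.monotone (Fin.zero_le j)))
    have heq := hmax.2 hch (Set.subset_insert _ _)
    have hzmem : z ∈ Set.range c := heq ▸ Set.mem_insert _ _
    obtain ⟨j, rfl⟩ := hzmem
    exact hc.monotone (Fin.zero_le j)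
  have hmaxc : IsMax (c (Fin.last s)) := by
    intro z hz
    have hch : IsChain (· ≤ ·) (insert z (Set.range c)) := by
      refine hmax.1.insert ?_
      rintro b ⟨j, rfl⟩ _
      exact Or.inr ((hc.monotone (Fin.le_last j)).trans hz)
    have heq := hmax.2 hch (Set.subset_insert _ _)
    have hzmem : z ∈ Set.range c := heq ▸ Set.mem_insert _ _
    obtain ⟨j, rfl⟩ := hzmem
    exact hc.monotone (Fin.le_last j)
  -- consecutive elements of c are covers
  have hcov : ∀ i : Fin s, c i.castSucc ⋖ c i.succ := by
    intro i
    refine ⟨hc (Fin.castSucc_lt_succ : i.castSucc < i.succ), fun w h1 h2 => ?_⟩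
    have hch : IsChain (· ≤ ·) (insert w (Set.range c)) := by
      refine hmax.1.insert ?_
      rintro b ⟨j, rfl⟩ _
      rcases le_or_gt (j : ℕ) (i : ℕ) with h | h
      · exact Or.inr ((hc.monotone (show j ≤ i.castSucc by
          simp [Fin.le_def]; omega)).trans h1.le)
      · exact Or.inl (h2.le.trans (hc.monotone (show i.succ ≤ j by
          simp [Fin.le_def]; omega)))
    have heq := hmax.2 hch (Set.subset_insert _ _)
    have hwmem : w ∈ Set.range c := heq ▸ Set.mem_insert _ _
    obtain ⟨j, rfl⟩ := hwmem
    have hj1 : i.castSucc < j := hc.lt_iff_lt.mp h1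
    have hj2 : j < i.succ := hc.lt_iff_lt.mp h2
    simp [Fin.lt_def] at hj1 hj2
    omega
  -- the sequence cc : ℕ → Y
  set cc : ℕ → Y := fun i => c ⟨min i s, Nat.lt_succ_of_le (min_le_right i s)⟩ with hcc
  have ccval : ∀ i (hi : i ≤ s), cc i = c ⟨i, by omega⟩ := by
    intro i hi
    have hmin : i ⊓ s = i := by omega
    simp only [hcc]
    exact congrArg c (Fin.ext (by simp [hmin]))
  have ccmono : Monotone cc := by
    intro i j hij
    exact hc.monotone (by simp [Fin.le_def]; omega)
  have cc0 : cc 0 = c 0 := by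
    rw [ccval 0 (by omega)]; exact congrArg c (Fin.ext rfl)
  -- the lift of the bottom element
  obtain ⟨x0pre, hx0pre⟩ := hss.1 (c 0)
  obtain ⟨xh, hxh_le, hxh_rank, hxh_σ⟩ := hss.2 x0pre (c 0) (le_of_eq hx0pre)
  -- the ascending lift
  set h : ℕ → X := liftSeq hss cc xh with hh
  have hspec := liftSeq_spec hss cc xh ccmono (by rw [cc0]; exact hxh_σ)
    (by rw [cc0]; exact hxh_rank)
  have hspec' : ∀ i, σ (h i) = cc i ∧ ρX (h i) = ρY (cc i) ∧ h i ≤ h (i+1) := hspec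
  have h0 : h 0 = xh := rfl
  -- covers in the ascending lift
  have hcovh : ∀ j < s, h j ⋖ h (j+1) := by
    intro j hj
    have hle : h j ≤ h (j+1) := (hspec' j).2.2
    have hrk : ρX (h (j+1)) = ρX (h j) + 1 := by
      have e1 := (hspec' j).2.1
      have e2 := (hspec' (j+1)).2.1
      have e3 : ρY (cc (j+1)) = ρY (cc j) + 1 := by
        rw [ccval j (by omega), ccval (j+1) (by omega)]
        have hcv := hcov ⟨j, hj⟩
        have e4 : (⟨j, hj⟩ : Fin s).castSucc = (⟨j, by omega⟩ : Fin (s+1)) := rfl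
        have e5 : (⟨j, hj⟩ : Fin s).succ = (⟨j+1, by omega⟩ : Fin (s+1)) := rfl
        rw [e4, e5] at hcv
        exact hρY hcv
      omega
    have hne : h j ≠ h (j+1) := by
      intro heq
      have e1 := (hspec' j).1
      have e2 := (hspec' (j+1)).1
      rw [heq, e2] at e1
      rw [ccval j (by omega), ccval (j+1) (by omega)] at e1
      have := hc.injective e1
      have hval : j + 1 = j := congrArg Fin.val this
      omega
    refine ⟨lt_of_le_of_ne hle hne, fun w h1 h2 => ?_⟩
    have := rank_lt hρX h1
    have := rank_lt hρX h2
    omega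
  -- the descending chain from xh to a minimal element
  obtain ⟨k, f, hf, hfk, hf0⟩ := descChain xh
  -- the full chain
  set d : ℕ → X := fun i => if i ≤ k then f i else h (i - k) with hd
  have hd_le : ∀ i ≤ k, d i = f i := by intro i hi; simp [hd, hi]
  have hd_ge : ∀ i, k ≤ i → d i = h (i - k) := by
    intro i hi
    rcases Nat.eq_or_lt_of_le hi with h' | h'
    · subst h'; simp [hd, hfk, ← h0]
    · simp [hd, Nat.not_le.mpr h']
  have dcov : ∀ i < k + s, d i ⋖ d (i+1) := by
    intro i hi
    rcases Nat.lt_or_ge i k with h' | h'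
    · rw [hd_le i (by omega), hd_le (i+1) (by omega)]
      exact hf i h'
    · rw [hd_ge i h', hd_ge (i+1) (by omega)]
      have : i + 1 - k = (i - k) + 1 := by omega
      rw [this]
      exact hcovh (i - k) (by omega)
  -- assemble
  refine ⟨k + s, fun i => d i.val, ?_, ?_, ?_, ?_⟩
  · -- strict mono
    rw [Fin.strictMono_iff_lt_succ]
    intro i
    simpa using (dcov i.val i.isLt).lt
  · -- max chain
    constructor
    · rintro _ ⟨i, rfl⟩ _ ⟨j, rfl⟩ _
      rcases le_total i j with h' | h'
      · exact Or.inl (covChain_mono d (k+s) dcov i.val j.val h' (by omega))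
      · exact Or.inr (covChain_mono d (k+s) dcov j.val i.val h' (by omega))
    · intro t htchain hsub
      refine Set.Subset.antisymm hsub fun w hw => ?_
      by_contra hnot
      have hmem : ∀ i ≤ k + s, d i ∈ t := fun i hi =>
        hsub ⟨⟨i, by omega⟩, rfl⟩
      have hne : ∀ i ≤ k + s, w ≠ d i := by
        intro i hi heq
        exact hnot (heq ▸ ⟨⟨i, by omega⟩, rfl⟩)
      have hcompar : ∀ i ≤ k + s, w ≤ d i ∨ d i ≤ w := by
        intro i hi
        exact htchain hw (hmem i hi) (hne i hi)
      have hdmin : IsMin (d 0) := by rw [hd_le 0 (by omega)]; exact hf0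
      have hdmax : IsMax (d (k + s)) := by
        rw [hd_ge (k+s) (by omega)]
        intro z hz
        rcases eq_or_lt_of_le hz with h' | h'
        · exact h'.ge
        · exfalso
          have hσz : σ z = c (Fin.last s) := by
            have h1 : cc (k + s - k) ≤ σ z := (hspec' _).1 ▸ hmono hz
            have h2 : cc (k + s - k) = c (Fin.last s) := by
              rw [show k + s - k = s by omega, ccval s le_rfl]
              exact congrArg c (Fin.ext rfl)
            exact le_antisymm (hmaxc (h2 ▸ h1)) (h2 ▸ h1)
          have h3 : ρX z ≤ ρY (c (Fin.last s)) := hσz ▸ hrank z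
          have h4 : ρX (h (k + s - k)) = ρY (c (Fin.last s)) := by
            rw [(hspec' _).2.1, show k + s - k = s by omega, ccval s le_rfl,
              show (⟨s, by omega⟩ : Fin (s+1)) = Fin.last s from rfl]
          have h5 := rank_lt hρX h'
          omega
      have hP0 : d 0 ≤ w := by
        rcases hcompar 0 (by omega) with h' | h'
        · exact absurd (le_antisymm h' (hdmin h')) (hne 0 (by omega))
        · exact h'
      have hPn : ¬ d (k + s) ≤ w := by
        intro h'
        exact hne (k+s) le_rfl (le_antisymm (hdmax h') h')
      obtain ⟨i, hi, h1, h2⟩ := exists_switch (fun i => d i ≤ w) (k + s) hP0 hPn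
      have hw2 : w ≤ d (i+1) := by
        rcases hcompar (i+1) (by omega) with h' | h'
        · exact h'
        · exact absurd h' h2
      rcases eq_or_lt_of_le h1 with h' | h'
      · exact hne i (by omega) h'.symm
      · rcases eq_or_lt_of_le hw2 with h'' | h''
        · exact hne (i+1) (by omega) h''
        · exact (dcov i hi).2 h' h''
  · -- image
    ext y
    constructor
    · rintro ⟨_, ⟨i, rfl⟩, rfl⟩
      show σ (d i.val) ∈ Set.range c
      rcases le_or_gt (i : ℕ) k with h' | h'
      · have : σ (d i.val) = c 0 := by
          rw [hd_le i.val h']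
          have h1 : f i.val ≤ f k := covChain_mono f k hf i.val k h' le_rfl
          have h2 : σ (f i.val) ≤ c 0 := by
            calc σ (f i.val) ≤ σ (f k) := hmono h1
            _ = c 0 := by rw [hfk]; exact hxh_σ
          exact le_antisymm h2 (hminc h2)
        rw [this]; exact ⟨0, rfl⟩
      · rw [hd_ge i.val h'.le]
        rw [(hspec' _).1, ccval (i.val - k) (by omega)]
        exact ⟨⟨i.val - k, by omega⟩, rfl⟩
    · rintro ⟨j, rfl⟩
      refine ⟨d (k + j.val), ⟨⟨k + j.val, by omega⟩, rfl⟩, ?_⟩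
      rw [hd_ge (k + j.val) (by omega), show k + j.val - k = j.val by omega]
      rw [(hspec' _).1, ccval j.val (by omega)]
  · -- rank formula
    have hA : ρX (f k) = ρX (f 0) + k := covChain_rank hρX f k hf
    have hB : ρX (f k) = ρY (c 0) := by rw [hfk, hxh_rank]
    have hC : d 0 = f 0 := hd_le 0 (by omega)
    simp only [Fin.val_zero, hC]
    push_cast
    omega

end SFSPaper
end

section
/- Let X, Y, Z be finite lower Eulerian posets with rank functions ρ_X, ρ_Y, ρ_Z respectively. Let σ : X → Y be a strong formal subdivision and let τ : Y → Z be an order-preserving, rank-increasing function. Then τ is a strong formal subdivision if and only if τ ∘ σ is a strong formal subdivision. -/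
namespace SFSPaper

variable {α β : Type*}

lemma finsum_cond_eq_filter' {γ : Type*} [Fintype γ] (p : γ → Prop) [DecidablePred p]
    (f : γ → ℚ) :
    (∑ᶠ (x : γ) (_ : p x), f x) = ∑ x ∈ Finset.univ.filter p, f x := by
  refine finsum_cond_eq_sum_of_cond_iff f ?_
  intro x _
  simp

lemma key_lemma {X Y Z : Type*} [PartialOrder X] [PartialOrder Y] [Finite X] [Finite Y]
    (ρX : X → ℤ) (ρY : Y → ℤ) (ρZ : Z → ℤ)
    (σ : X → Y) (hσ : StrongFormalSubdivision ρX ρY σ) (τ : Y → Z) (x : X) (z : Z) :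
    (∑ᶠ (x' : X) (_ : x ≤ x' ∧ τ (σ x') = z), (-1 : ℚ) ^ (ρZ z - ρX x')) =
      ∑ᶠ (y : Y) (_ : σ x ≤ y ∧ τ y = z), (-1 : ℚ) ^ (ρZ z - ρY y) := by
  classical
  have := Fintype.ofFinite X
  have := Fintype.ofFinite Y
  rw [finsum_cond_eq_filter', finsum_cond_eq_filter']
  have hmaps : ∀ x' ∈ Finset.univ.filter (fun x' => x ≤ x' ∧ τ (σ x') = z),
      σ x' ∈ Finset.univ.filter (fun y => σ x ≤ y ∧ τ y = z) := by
    intro x' hx'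
    simp only [Finset.mem_filter, Finset.mem_univ, true_and] at hx' ⊢
    exact ⟨hσ.1 hx'.1, hx'.2⟩
  rw [← Finset.sum_fiberwise_of_maps_to hmaps (fun x' => (-1 : ℚ) ^ (ρZ z - ρX x'))]
  refine Finset.sum_congr rfl ?_
  intro y hy
  simp only [Finset.mem_filter, Finset.mem_univ, true_and] at hy
  have hfib : (Finset.univ.filter (fun x' => x ≤ x' ∧ τ (σ x') = z)).filter
        (fun x' => σ x' = y)
      = Finset.univ.filter (fun x' => x ≤ x' ∧ σ x' = y) := by
    ext x'
    simp only [Finset.mem_filter, Finset.mem_univ, true_and]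
    constructor
    · rintro ⟨⟨h1, _⟩, h3⟩; exact ⟨h1, h3⟩
    · rintro ⟨h1, h3⟩; exact ⟨⟨h1, by rw [h3, hy.2]⟩, h3⟩
  rw [hfib]
  have hone := hσ.2.2.2 x y hy.1
  rw [finsum_cond_eq_filter'] at hone
  calc ∑ x' ∈ Finset.univ.filter (fun x' => x ≤ x' ∧ σ x' = y), (-1 : ℚ) ^ (ρZ z - ρX x')
      = ∑ x' ∈ Finset.univ.filter (fun x' => x ≤ x' ∧ σ x' = y),
          (-1 : ℚ) ^ (ρZ z - ρY y) * (-1 : ℚ) ^ (ρY y - ρX x') := by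
        refine Finset.sum_congr rfl fun x' _ => ?_
        rw [← zpow_add₀ (by norm_num : (-1 : ℚ) ≠ 0)]
        ring_nf
    _ = (-1 : ℚ) ^ (ρZ z - ρY y) := by rw [← Finset.mul_sum, hone, mul_one]

/-- If `σ : X → Y` is a strong formal subdivision between finite lower
Eulerian posets and `τ : Y → Z` is order-preserving and rank-increasing, then `τ` is a
strong formal subdivision if and only if `τ ∘ σ` is. -/
theorem strongFormalSubdivision_comp_iff {X Y Z : Type*}
    [PartialOrder X] [PartialOrder Y] [PartialOrder Z] [Finite X] [Finite Y] [Finite Z]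
    (ρX : X → ℤ) (ρY : Y → ℤ) (ρZ : Z → ℤ)
    (hX : LowerEulerian ρX) (hY : LowerEulerian ρY) (hZ : LowerEulerian ρZ)
    (σ : X → Y) (hσ : StrongFormalSubdivision ρX ρY σ)
    (τ : Y → Z) (hτmono : Monotone τ) (hτrank : RankIncreasing ρY ρZ τ) :
    StrongFormalSubdivision ρY ρZ τ ↔ StrongFormalSubdivision ρX ρZ (τ ∘ σ) := by
  obtain ⟨hσmono, hσrank, ⟨hσsurj, hσstrong⟩, hσsum⟩ := hσ
  constructor
  · rintro ⟨hτm, hτr, ⟨hτsurj, hτstrong⟩, hτsum⟩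
    refine ⟨hτm.comp hσmono, fun x => (hσrank x).trans (hτr (σ x)), ⟨hτsurj.comp hσsurj, ?_⟩, ?_⟩
    · intro x z hxz
      obtain ⟨y', hy1, hy2, hy3⟩ := hτstrong (σ x) z hxz
      obtain ⟨x', hx1, hx2, hx3⟩ := hσstrong x y' hy1
      exact ⟨x', hx1, hx2.trans hy2, by simp [Function.comp, hx3, hy3]⟩
    · intro x z hxz
      simp only [Function.comp_apply]
      rw [key_lemma ρX ρY ρZ σ ⟨hσmono, hσrank, ⟨hσsurj, hσstrong⟩, hσsum⟩ τ x z]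
      exact hτsum (σ x) z hxz
  · rintro ⟨hcm, hcr, ⟨hcsurj, hcstrong⟩, hcsum⟩
    have hτsurj : Function.Surjective τ := fun z => by
      obtain ⟨x, hx⟩ := hcsurj z; exact ⟨σ x, hx⟩
    refine ⟨hτmono, hτrank, ⟨hτsurj, ?_⟩, ?_⟩
    · intro y z hyz
      obtain ⟨x, rfl⟩ := hσsurj y
      obtain ⟨x', hx1, hx2, hx3⟩ := hcstrong x z hyz
      refine ⟨σ x', hσmono hx1, le_antisymm ?_ ?_, hx3⟩
      · calc ρY (σ x') ≤ ρZ (τ (σ x')) := hτrank (σ x')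
          _ = ρZ z := by rw [show τ (σ x') = z from hx3]
      · rw [← hx2]; exact hσrank x'
    · intro y z hyz
      obtain ⟨x, rfl⟩ := hσsurj y
      have := hcsum x z hyz
      simp only [Function.comp_apply] at this
      rwa [key_lemma ρX ρY ρZ σ ⟨hσmono, hσrank, ⟨hσsurj, hσstrong⟩, hσsum⟩ τ x z] at this

end SFSPaper
end

section
/- Let σ : X → Y be a strong formal subdivision between finite lower Eulerian posets X and Y with rank functions ρ_X and ρ_Y. Then ∑_{x ∈ X} (−1)^{ρ_X(x)} = ∑_{y ∈ Y} (−1)^{ρ_Y(y)}. In particular, |X| ≡ |Y| (mod 2). -/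
namespace SFSPaper

variable {α β : Type*}

private lemma neg_one_zpow_mul_aux (a c : ℤ) :
    (-1 : ℚ) ^ a * (-1 : ℚ) ^ (a - c) = (-1 : ℚ) ^ c := by
  have h1 : (-1 : ℚ) ≠ 0 := by norm_num
  rw [← zpow_add₀ h1, show a + (a - c) = c + 2 * (a - c) by ring, zpow_add₀ h1,
    zpow_mul]
  norm_num

/-- For a strong formal subdivision `σ : X → Y` between finite lower
Eulerian posets, `∑_{x ∈ X} (-1)^(ρ_X x) = ∑_{y ∈ Y} (-1)^(ρ_Y y)`; in particular
`|X| ≡ |Y| (mod 2)`. -/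
theorem eulerSum_eq_of_strongFormalSubdivision {X Y : Type*}
    [PartialOrder X] [PartialOrder Y] [Finite X] [Finite Y]
    (ρX : X → ℤ) (ρY : Y → ℤ)
    (hX : LowerEulerian ρX) (hY : LowerEulerian ρY)
    (σ : X → Y) (hσ : StrongFormalSubdivision ρX ρY σ) :
    (∑ᶠ x : X, (-1 : ℚ) ^ ρX x) = (∑ᶠ y : Y, (-1 : ℚ) ^ ρY y) ∧
      Nat.card X % 2 = Nat.card Y % 2 := by
  classical
  cases nonempty_fintype X
  cases nonempty_fintype Y
  obtain ⟨b, hb⟩ := hX.2.1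
  obtain ⟨hmono, hri, ⟨hsurj, _⟩, hsum⟩ := hσ
  -- fiber sums
  have hfib : ∀ y : Y, ∑ x ∈ Finset.univ.filter (fun x => σ x = y),
      (-1 : ℚ) ^ (ρY y - ρX x) = 1 := by
    intro y
    have hby : σ b ≤ y := by
      obtain ⟨x, rfl⟩ := hsurj y
      exact hmono (hb x)
    have := hsum b y hby
    rw [finsum_cond_eq_sum_of_cond_iff _ (t := Finset.univ.filter (fun x => σ x = y))
      (by intro x; simp [hb x])] at this
    exact this
  have key : (∑ x : X, (-1 : ℚ) ^ ρX x) = ∑ y : Y, (-1 : ℚ) ^ ρY y := by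
    rw [← Finset.sum_fiberwise Finset.univ σ (fun x => (-1 : ℚ) ^ ρX x)]
    refine Finset.sum_congr rfl fun y _ => ?_
    calc ∑ x ∈ Finset.univ.filter (fun x => σ x = y), (-1 : ℚ) ^ ρX x
        = ∑ x ∈ Finset.univ.filter (fun x => σ x = y),
            (-1 : ℚ) ^ ρY y * (-1 : ℚ) ^ (ρY y - ρX x) := by
          refine Finset.sum_congr rfl fun x _ => ?_
          rw [neg_one_zpow_mul_aux]
      _ = (-1 : ℚ) ^ ρY y * ∑ x ∈ Finset.univ.filter (fun x => σ x = y),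
            (-1 : ℚ) ^ (ρY y - ρX x) := by rw [Finset.mul_sum]
      _ = (-1 : ℚ) ^ ρY y := by rw [hfib y, mul_one]
  constructor
  · rw [finsum_eq_sum_of_fintype, finsum_eq_sum_of_fintype]
    exact key
  · -- parity
    have hiteX : (∑ x : X, (-1 : ℚ) ^ ρX x) =
        ((∑ x : X, if Even (ρX x) then (1 : ℤ) else -1 : ℤ) : ℚ) := by
      push_cast
      refine Finset.sum_congr rfl fun g _ => ?_
      by_cases h : Even (ρX g)
      · simp [h, h.neg_one_zpow]
      · simp [h, (Int.not_even_iff_odd.mp h).neg_one_zpow]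
    have hiteY : (∑ y : Y, (-1 : ℚ) ^ ρY y) =
        ((∑ y : Y, if Even (ρY y) then (1 : ℤ) else -1 : ℤ) : ℚ) := by
      push_cast
      refine Finset.sum_congr rfl fun g _ => ?_
      by_cases h : Even (ρY g)
      · simp [h, h.neg_one_zpow]
      · simp [h, (Int.not_even_iff_odd.mp h).neg_one_zpow]
    have hint : (∑ x : X, if Even (ρX x) then (1 : ℤ) else -1) =
        (∑ y : Y, if Even (ρY y) then (1 : ℤ) else -1) := by
      have := key
      rw [hiteX, hiteY] at this
      exact_mod_cast this
    have hmod : ((Fintype.card X : ZMod 2)) = (Fintype.card Y : ZMod 2) := by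
      have := congrArg (fun n : ℤ => (n : ZMod 2)) hint
      simpa [Finset.card_univ, show (-1 : ZMod 2) = 1 by decide, apply_ite
        (fun n : ℤ => (n : ZMod 2))] using this
    rw [Nat.card_eq_fintype_card, Nat.card_eq_fintype_card]
    exact (ZMod.natCast_eq_natCast_iff' _ _ _).mp hmod


end SFSPaper
end

section
/- Let X and Y be finite ranked posets with rank functions ρ_X and ρ_Y, and let σ : X → Y be an order-preserving, rank-increasing, strongly surjective function. For any x ∈ X and y ∈ Y, viewed as elements of the non-Hausdorff mapping cylinder Cyl(σ), the element y covers x in Cyl(σ) if and only if σ(x) = y and ρ_X(x) = ρ_Y(y). -/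
namespace SFSPaper

variable {α β : Type*}

variable {α β : Type*}

/-- The order relation of the non-Hausdorff mapping cylinder of `σ : α → β` on `α ⊕ β`. -/
def cylLE [LE α] [LE β] (σ : α → β) : α ⊕ β → α ⊕ β → Prop
  | Sum.inl x, Sum.inl x' => x ≤ x'
  | Sum.inl x, Sum.inr y => σ x ≤ y
  | Sum.inr _, Sum.inl _ => False
  | Sum.inr y, Sum.inr y' => y ≤ y'

/-- The non-Hausdorff mapping cylinder of an order-preserving map `σ : α → β`, as a
partial order on `α ⊕ β`. -/
def cylPartialOrder [PartialOrder α] [PartialOrder β] (σ : α → β) (hσ : Monotone σ) :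
    PartialOrder (α ⊕ β) where
  le := cylLE σ
  lt a b := cylLE σ a b ∧ ¬ cylLE σ b a
  lt_iff_le_not_ge _ _ := Iff.rfl
  le_refl := by rintro (x | y) <;> simp [cylLE]
  le_trans := by
    rintro (x | y) (x' | y') (x'' | y'') hab hbc <;> simp only [cylLE] at * <;>
      first
        | exact hab.trans hbc
        | exact (hσ hab).trans hbc
  le_antisymm := by
    rintro (x | y) (x' | y') hab hba <;> simp only [cylLE] at *
    · exact congrArg Sum.inl (le_antisymm hab hba)
    · exact congrArg Sum.inr (le_antisymm hab hba)

/-- The rank function on the mapping cylinder: `ρX` on `X` and `ρY + 1` on `Y`. -/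
def cylRank (ρX : α → ℤ) (ρY : β → ℤ) : α ⊕ β → ℤ :=
  Sum.elim ρX fun y => ρY y + 1


theorem rank_lt_of_lt {α : Type*} [PartialOrder α] [Finite α] {ρ : α → ℤ}
    (h : IsRankFunction ρ) {z z' : α} (hzz : z < z') : ρ z < ρ z' := by
  induction z using WellFoundedGT.induction with
  | _ z IH =>
    obtain ⟨w, hcov, hle⟩ := hzz.exists_covby_le
    rcases eq_or_lt_of_le hle with rfl | hlt
    · have := h hcov; omega
    · have h1 := h hcov
      have h2 := IH w hcov.lt hlt
      omega

theorem rank_le_of_le {α : Type*} [PartialOrder α] [Finite α] {ρ : α → ℤ}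
    (h : IsRankFunction ρ) {z z' : α} (hzz : z ≤ z') : ρ z ≤ ρ z' := by
  rcases eq_or_lt_of_le hzz with rfl | hlt
  · exact le_refl _
  · exact (rank_lt_of_lt h hlt).le

/-- In the non-Hausdorff mapping cylinder of a strongly surjective,
order-preserving, rank-increasing map `σ`, an element `y ∈ Y` covers `x ∈ X` if and only if
`σ(x) = y` and `ρ_X(x) = ρ_Y(y)`. -/
theorem covBy_in_cyl_iff {X Y : Type*} [PartialOrder X] [PartialOrder Y] [Finite X] [Finite Y]
    (ρX : X → ℤ) (ρY : Y → ℤ) (hρX : IsRankFunction ρX) (hρY : IsRankFunction ρY)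
    (σ : X → Y) (hmono : Monotone σ) (hrank : RankIncreasing ρX ρY σ)
    (hss : StronglySurjective ρX ρY σ) (x : X) (y : Y) :
    @CovBy (X ⊕ Y) (cylPartialOrder σ hmono).toPreorder.toLT (Sum.inl x) (Sum.inr y) ↔
      σ x = y ∧ ρX x = ρY y := by
  letI : PartialOrder (X ⊕ Y) := cylPartialOrder σ hmono
  constructor
  · rintro ⟨hlt, hnb⟩
    have hle : σ x ≤ y := hlt.1
    have hσ : σ x = y := by
      by_contra hne
      have hslt : σ x < y := lt_of_le_of_ne hle hne
      exact @hnb (Sum.inr (σ x))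
        ⟨le_refl (σ x), not_false⟩ ⟨hslt.le, fun h => absurd (le_antisymm hslt.le h) hne⟩
    obtain ⟨x', hxx', hρ', hσ'⟩ := hss.2 x y (hσ ▸ le_refl y)
    rcases eq_or_lt_of_le hxx' with rfl | hxlt
    · exact ⟨hσ, hρ'⟩
    · exact absurd (@hnb (Sum.inl x')
        ⟨hxlt.le, fun h => absurd (le_antisymm hxlt.le h) hxlt.ne⟩
        ⟨le_of_eq hσ', not_false⟩) not_false
  · rintro ⟨hσ, hρ⟩
    constructor
    · exact ⟨hσ ▸ le_refl y, not_false⟩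
    · rintro (x' | y') hc1 hc2
      · have hxlt : x < x' := lt_of_le_of_ne hc1.1 (fun h => hc1.2 (h ▸ le_refl x'))
        have h1 : ρX x < ρX x' := rank_lt_of_lt hρX hxlt
        have h2 : ρX x' ≤ ρY (σ x') := hrank x'
        have h3 : ρY (σ x') ≤ ρY y := rank_le_of_le hρY hc2.1
        omega
      · have hylt : y' < y := lt_of_le_of_ne hc2.1 (fun h => hc2.2 (h ▸ le_refl y))
        have h1 : ρX x ≤ ρY (σ x) := hrank x
        have h2 : ρY (σ x) ≤ ρY y' := rank_le_of_le hρY hc1.1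
        have h3 : ρY y' < ρY y := rank_lt_of_lt hρY hylt
        rw [hρ] at h1
        omega


end SFSPaper
end

section
/- Let σ : X → Y be a strong formal subdivision between finite lower Eulerian posets X and Y with rank functions ρ_X and ρ_Y. Then the non-Hausdorff mapping cylinder Cyl(σ), equipped with the rank function ρ_{Cyl(σ)} equal to ρ_X on X and to ρ_Y + 1 on Y, is a lower Eulerian poset whose unique minimal element is 0̂_X. Moreover, the element 0̂_Y ∈ Y ⊆ Cyl(σ) is join-admissible and distinct from the minimal element of Cyl(σ); the set {z ∈ Cyl(σ) : 0̂_Y ≤ z} is exactly Y; for every x ∈ X the join x ∨ 0̂_Y in Cyl(σ) equals σ(x); and for every y ∈ Y, y ∨ 0̂_Y = y. -/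
namespace SFSPaper

variable {α β : Type*}

variable {α β : Type*}

private lemma neg_one_zpow_mul_self (n : ℤ) : (-1 : ℚ) ^ n * (-1 : ℚ) ^ n = 1 := by
  rw [← zpow_add₀ (by norm_num : (-1:ℚ) ≠ 0), ← two_mul, zpow_mul]
  norm_num

private lemma neg_one_zpow_inv (n : ℤ) : ((-1 : ℚ) ^ n)⁻¹ = (-1 : ℚ) ^ n :=
  inv_eq_of_mul_eq_one_right (neg_one_zpow_mul_self n)

private lemma neg_one_zpow_sub (a b : ℤ) : (-1 : ℚ) ^ (a - b) = (-1:ℚ) ^ a * (-1:ℚ) ^ b := by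
  rw [zpow_sub₀ (by norm_num : (-1:ℚ) ≠ 0), div_eq_mul_inv, neg_one_zpow_inv]

private lemma neg_one_zpow_cancel (a b : ℤ) :
    (-1 : ℚ) ^ a * (-1 : ℚ) ^ (a - b) = (-1:ℚ) ^ b := by
  rw [neg_one_zpow_sub, ← mul_assoc, neg_one_zpow_mul_self, one_mul]

private lemma neg_one_zpow_succ (n : ℤ) : (-1 : ℚ) ^ (n + 1) = -((-1:ℚ) ^ n) := by
  rw [zpow_add_one₀ (by norm_num : (-1:ℚ) ≠ 0)]; ring

open Finset in
private lemma finsum_cond_eq' {γ : Type*} [Fintype γ] (f : γ → ℚ) (p : γ → Prop)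
    [DecidablePred p] :
    (∑ᶠ (w : γ) (_ : p w), f w) = ∑ w ∈ univ.filter p, f w :=
  finsum_cond_eq_sum_of_cond_iff f (by simp)

open Finset Classical in
private lemma sum_fiber_eq {X Y : Type*} [PartialOrder X] [PartialOrder Y]
    [Fintype X] [Fintype Y]
    (ρX : X → ℤ) (ρY : Y → ℤ) (σ : X → Y) (hσ : StrongFormalSubdivision ρX ρY σ)
    (x : X) (y : Y) :
    ∑ x'' ∈ univ.filter (fun x'' => x ≤ x'' ∧ σ x'' ≤ y), (-1 : ℚ) ^ ρX x'' =
    ∑ y'' ∈ univ.filter (fun y'' => σ x ≤ y'' ∧ y'' ≤ y), (-1 : ℚ) ^ ρY y'' := by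
  have hmaps : ∀ x'' ∈ univ.filter (fun x'' => x ≤ x'' ∧ σ x'' ≤ y),
      σ x'' ∈ univ.filter (fun y'' => σ x ≤ y'' ∧ y'' ≤ y) := by
    intro x'' hx''
    simp only [mem_filter, mem_univ, true_and] at hx'' ⊢
    exact ⟨hσ.1 hx''.1, hx''.2⟩
  rw [← Finset.sum_fiberwise_of_maps_to hmaps (fun x'' => (-1 : ℚ) ^ ρX x'')]
  refine Finset.sum_congr rfl fun y'' hy'' => ?_
  simp only [mem_filter, mem_univ, true_and] at hy''
  have h1 : ((univ.filter (fun x'' => x ≤ x'' ∧ σ x'' ≤ y)).filter (fun x'' => σ x'' = y'')) =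
      univ.filter (fun x'' => x ≤ x'' ∧ σ x'' = y'') := by
    ext x''
    simp only [mem_filter, mem_univ, true_and]
    constructor
    · rintro ⟨⟨ha, _⟩, hc⟩; exact ⟨ha, hc⟩
    · rintro ⟨ha, hc⟩; exact ⟨⟨ha, hc ▸ hy''.2⟩, hc⟩
  rw [h1]
  have hs := hσ.2.2.2 x y'' hy''.1
  rw [finsum_cond_eq'] at hs
  calc ∑ x'' ∈ univ.filter (fun x'' => x ≤ x'' ∧ σ x'' = y''), (-1:ℚ) ^ ρX x''
      = ∑ x'' ∈ univ.filter (fun x'' => x ≤ x'' ∧ σ x'' = y''),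
          (-1:ℚ) ^ ρY y'' * (-1:ℚ) ^ (ρY y'' - ρX x'') :=
        Finset.sum_congr rfl fun x'' _ => (neg_one_zpow_cancel _ _).symm
    _ = (-1:ℚ) ^ ρY y'' * ∑ x'' ∈ univ.filter (fun x'' => x ≤ x'' ∧ σ x'' = y''),
          (-1:ℚ) ^ (ρY y'' - ρX x'') := by rw [Finset.mul_sum]
    _ = (-1:ℚ) ^ ρY y'' := by rw [hs, mul_one]

open Finset

/-- The non-Hausdorff mapping cylinder of a strong formal subdivision
`σ : X → Y`, with rank function `ρ_X` on `X` and `ρ_Y + 1` on `Y`, is lower Eulerian with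
unique minimal element `0̂_X`; the element `0̂_Y ∈ Y ⊆ Cyl(σ)` is join-admissible and
distinct from the minimal element; `{z : 0̂_Y ≤ z} = Y`; `x ∨ 0̂_Y = σ(x)` for `x ∈ X`; and
`y ∨ 0̂_Y = y` for `y ∈ Y`. -/
theorem cyl_lowerEulerian {X Y : Type*} [PartialOrder X] [PartialOrder Y] [Finite X] [Finite Y]
    (ρX : X → ℤ) (ρY : Y → ℤ)
    (hX : LowerEulerian ρX) (hY : LowerEulerian ρY)
    (σ : X → Y) (hσ : StrongFormalSubdivision ρX ρY σ)
    (bX : X) (hbX : ∀ x : X, bX ≤ x) (bY : Y) (hbY : ∀ y : Y, bY ≤ y) :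
    @LowerEulerian (X ⊕ Y) (cylPartialOrder σ hσ.1) (cylRank ρX ρY) ∧
    (∀ z : X ⊕ Y, cylLE σ (Sum.inl bX) z) ∧
    @JoinAdmissible (X ⊕ Y) (cylPartialOrder σ hσ.1).toPreorder (Sum.inr bY) ∧
    (Sum.inr bY : X ⊕ Y) ≠ Sum.inl bX ∧
    {z : X ⊕ Y | cylLE σ (Sum.inr bY) z} = Set.range Sum.inr ∧
    (∀ x : X, @IsLeast (X ⊕ Y) (cylPartialOrder σ hσ.1).toPreorder.toLE
      {w : X ⊕ Y | cylLE σ (Sum.inl x) w ∧ cylLE σ (Sum.inr bY) w} (Sum.inr (σ x))) ∧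
    (∀ y : Y, @IsLeast (X ⊕ Y) (cylPartialOrder σ hσ.1).toPreorder.toLE
      {w : X ⊕ Y | cylLE σ (Sum.inr y) w ∧ cylLE σ (Sum.inr bY) w} (Sum.inr y)) := by
  classical
  cases nonempty_fintype X
  cases nonempty_fintype Y
  have mk_lt : ∀ z z' : X ⊕ Y, cylLE σ z z' → ¬ cylLE σ z' z →
      @LT.lt (X ⊕ Y) (@Preorder.toLT _ (cylPartialOrder σ hσ.1).toPreorder) z z' :=
    fun _ _ h1 h2 => And.intro h1 h2
  have un_lt : ∀ z z' : X ⊕ Y,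
      @LT.lt (X ⊕ Y) (@Preorder.toLT _ (cylPartialOrder σ hσ.1).toPreorder) z z' →
      cylLE σ z z' ∧ ¬ cylLE σ z' z := fun _ _ h => h
  -- minimal element
  have hmin : ∀ z : X ⊕ Y, cylLE σ (Sum.inl bX) z := by
    rintro (x | y)
    · exact hbX x
    · obtain ⟨x, rfl⟩ := hσ.2.2.1.1 y
      exact hσ.1 (hbX x)
  -- rank function
  have hrank : @IsRankFunction (X ⊕ Y) (cylPartialOrder σ hσ.1).toPreorder
      (cylRank ρX ρY) := by
    rintro (x | y) (x' | y') h
    · have h1 := un_lt _ _ h.1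
      have hxx : x ⋖ x' := by
        refine ⟨lt_of_le_not_ge h1.1 h1.2, fun c hc1 hc2 => ?_⟩
        exact h.2 (mk_lt (Sum.inl x) (Sum.inl c) hc1.le fun hh => hc1.not_ge hh)
          (mk_lt (Sum.inl c) (Sum.inl x') hc2.le fun hh => hc2.not_ge hh)
      exact hX.1 hxx
    · -- inl x ⋖ inr y'
      have hle : σ x ≤ y' := (un_lt _ _ h.1).1
      obtain ⟨x', hxx', hrk, hσx'⟩ := hσ.2.2.1.2 x y' hle
      have hxeq : x = x' := by
        by_contra hne
        have hlt : x < x' := lt_of_le_of_ne hxx' hne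
        exact h.2 (mk_lt (Sum.inl x) (Sum.inl x') hlt.le fun hh => hlt.not_ge hh)
          (mk_lt (Sum.inl x') (Sum.inr y') (le_of_eq hσx') fun hh => hh)
      show ρY y' + 1 = ρX x + 1
      rw [hxeq, hrk]
    · have : False := (un_lt _ _ h.1).1
      exact this.elim
    · have h1 := un_lt _ _ h.1
      have hyy : y ⋖ y' := by
        refine ⟨lt_of_le_not_ge h1.1 h1.2, fun c hc1 hc2 => ?_⟩
        exact h.2 (mk_lt (Sum.inr y) (Sum.inr c) hc1.le fun hh => hc1.not_ge hh)
          (mk_lt (Sum.inr c) (Sum.inr y') hc2.le fun hh => hc2.not_ge hh)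
      show ρY y' + 1 = (ρY y + 1) + 1
      rw [hY.1 hyy]
  -- the interval sum splits
  have hsum : ∀ z z' : X ⊕ Y,
      @intervalEulerSum (X ⊕ Y) (cylPartialOrder σ hσ.1).toPreorder (cylRank ρX ρY) z z' =
      (∑ x'' ∈ univ.filter (fun x'' : X => cylLE σ z (Sum.inl x'') ∧ cylLE σ (Sum.inl x'') z'),
        (-1:ℚ) ^ ρX x'') +
      (∑ y'' ∈ univ.filter (fun y'' : Y => cylLE σ z (Sum.inr y'') ∧ cylLE σ (Sum.inr y'') z'),
        (-1:ℚ) ^ (ρY y'' + 1)) := by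
    intro z z'
    unfold intervalEulerSum
    rw [finsum_cond_eq', Finset.sum_filter, Fintype.sum_sum_type,
      ← Finset.sum_filter, ← Finset.sum_filter]
    rfl
  -- Euler condition
  have heuler : ∀ z z' : X ⊕ Y,
      @LT.lt (X ⊕ Y) (@Preorder.toLT _ (cylPartialOrder σ hσ.1).toPreorder) z z' →
      @intervalEulerSum (X ⊕ Y) (cylPartialOrder σ hσ.1).toPreorder
        (cylRank ρX ρY) z z' = 0 := by
    rintro (x | y) (x' | y') h
    · -- inl, inl
      rw [hsum]
      have h2 : (univ.filter (fun y'' : Y => cylLE σ (Sum.inl x) (Sum.inr y'') ∧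
          cylLE σ (Sum.inr y'') (Sum.inl x'))) = ∅ := by
        ext y''; simp [cylLE]
      rw [h2, Finset.sum_empty, add_zero]
      have hlt := un_lt _ _ h
      have h3 := hX.2.2 x x' (lt_of_le_not_ge hlt.1 hlt.2)
      unfold intervalEulerSum at h3
      rw [finsum_cond_eq'] at h3
      have hA : (univ.filter (fun x'' : X => cylLE σ (Sum.inl x) (Sum.inl x'') ∧
          cylLE σ (Sum.inl x'') (Sum.inl x'))) =
          univ.filter (fun w : X => x ≤ w ∧ w ≤ x') := by
        ext x''; simp [cylLE]
        exact Finset.mem_filter.trans (and_iff_right (Finset.mem_univ _))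
      rw [hA, h3]
    · -- inl, inr
      rw [hsum]
      have hA : (univ.filter (fun x'' : X => cylLE σ (Sum.inl x) (Sum.inl x'') ∧
          cylLE σ (Sum.inl x'') (Sum.inr y'))) =
          univ.filter (fun x'' : X => x ≤ x'' ∧ σ x'' ≤ y') := by
        ext x''; simp [cylLE]
        exact Finset.mem_filter.trans (and_iff_right (Finset.mem_univ _))
      have hB : (univ.filter (fun y'' : Y => cylLE σ (Sum.inl x) (Sum.inr y'') ∧
          cylLE σ (Sum.inr y'') (Sum.inr y'))) =
          univ.filter (fun y'' : Y => σ x ≤ y'' ∧ y'' ≤ y') := by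
        ext y''; simp [cylLE]
        exact Finset.mem_filter.trans (and_iff_right (Finset.mem_univ _))
      rw [hA, hB, sum_fiber_eq ρX ρY σ hσ x y']
      rw [Finset.sum_congr rfl (fun y'' _ => neg_one_zpow_succ (ρY y'')),
        Finset.sum_neg_distrib]
      ring
    · have : False := (un_lt _ _ h).1
      exact this.elim
    · -- inr, inr
      rw [hsum]
      have h1 : (univ.filter (fun x'' : X => cylLE σ (Sum.inr y) (Sum.inl x'') ∧
          cylLE σ (Sum.inl x'') (Sum.inr y'))) = ∅ := by
        ext x''; simp [cylLE]
      rw [h1, Finset.sum_empty, zero_add]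
      have hB : (univ.filter (fun y'' : Y => cylLE σ (Sum.inr y) (Sum.inr y'') ∧
          cylLE σ (Sum.inr y'') (Sum.inr y'))) =
          univ.filter (fun w : Y => y ≤ w ∧ w ≤ y') := by
        ext y''; simp [cylLE]
        exact Finset.mem_filter.trans (and_iff_right (Finset.mem_univ _))
      rw [hB]
      have hlt := un_lt _ _ h
      have h3 := hY.2.2 y y' (lt_of_le_not_ge hlt.1 hlt.2)
      unfold intervalEulerSum at h3
      rw [finsum_cond_eq'] at h3
      rw [Finset.sum_congr rfl (fun y'' _ => neg_one_zpow_succ (ρY y'')),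
        Finset.sum_neg_distrib, h3, neg_zero]
  -- joins
  have hjoinX : ∀ x : X, @IsLeast (X ⊕ Y) (cylPartialOrder σ hσ.1).toPreorder.toLE
      {w : X ⊕ Y | cylLE σ (Sum.inl x) w ∧ cylLE σ (Sum.inr bY) w} (Sum.inr (σ x)) := by
    intro x
    constructor
    · exact ⟨le_refl (σ x), hbY _⟩
    · rintro (x' | y') ⟨hw1, hw2⟩
      · have : False := hw2
        exact this.elim
      · exact hw1
  have hjoinY : ∀ y : Y, @IsLeast (X ⊕ Y) (cylPartialOrder σ hσ.1).toPreorder.toLE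
      {w : X ⊕ Y | cylLE σ (Sum.inr y) w ∧ cylLE σ (Sum.inr bY) w} (Sum.inr y) := by
    intro y
    constructor
    · exact ⟨le_refl y, hbY _⟩
    · rintro (x' | y') ⟨hw1, hw2⟩
      · have : False := hw2
        exact this.elim
      · exact hw1
  refine ⟨⟨hrank, ⟨Sum.inl bX, hmin⟩, fun z z' h => heuler z z' h⟩, hmin, ?_, ?_, ?_,
    hjoinX, hjoinY⟩
  · rintro (x | y)
    · exact ⟨Sum.inr (σ x), hjoinX x⟩
    · exact ⟨Sum.inr y, hjoinY y⟩
  · simp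
  · ext (x | y) <;> simp [cylLE, hbY]

end SFSPaper
end

section
/- Let Γ be a finite lower Eulerian poset with rank function ρ_Γ and let q be a join-admissible element of Γ with q ≠ 0̂_Γ. Set X = Γ ∖ {z ∈ Γ : q ≤ z} and Y = {z ∈ Γ : q ≤ z}, and define σ̂ : X → Y by σ̂(x) = x ∨ q. Then for all x ∈ X and y ∈ Y with σ̂(x) ≤ y, there exists x' ∈ X with x ≤ x', ρ_Γ(y) − ρ_Γ(x') = 1, and σ̂(x') = y. In particular, σ̂ is strongly surjective with respect to the rank functions given by restricting ρ_Γ to X and restricting ρ_Γ − 1 to Y. -/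
namespace SFSPaper

variable {α β : Type*}

lemma key_join_lemma {Γ : Type*} [PartialOrder Γ] [Finite Γ] (ρ : Γ → ℤ)
    (hΓ : LowerEulerian ρ) (q : Γ) (jn : Γ → Γ)
    (hjn : ∀ z : Γ, IsLeast {w : Γ | z ≤ w ∧ q ≤ w} (jn z)) :
    ∀ x : Γ, ¬ q ≤ x → ∀ y : Γ, q ≤ y → jn x ≤ y →
      ∃ x' : Γ, ¬ q ≤ x' ∧ x ≤ x' ∧ ρ y = ρ x' + 1 ∧ jn x' = y := by
  classical
  have : Fintype Γ := Fintype.ofFinite Γ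
  have hsum : ∀ z z' : Γ, intervalEulerSum ρ z z' =
      ∑ w ∈ Finset.univ.filter (fun w => z ≤ w ∧ w ≤ z'), (-1 : ℚ) ^ (ρ w) := by
    intro z z'
    refine finsum_cond_eq_sum_of_cond_iff _ ?_
    intro w _
    simp
  have wf : WellFounded ((· > ·) : Γ → Γ → Prop) := wellFounded_gt
  intro x
  induction x using WellFounded.induction wf with
  | _ x ih =>
  intro hx y hy hxy
  have hxjn : x ≤ jn x := (hjn x).1.1
  by_cases hcase : ∃ w, x < w ∧ w ≤ y ∧ ¬ q ≤ w
  · obtain ⟨w, hxw, hwy, hqw⟩ := hcase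
    have hjnw : jn w ≤ y := (hjn w).2 ⟨hwy, hy⟩
    obtain ⟨x', h1, h2, h3, h4⟩ := ih w hxw hqw y hy hjnw
    exact ⟨x', h1, le_trans hxw.le h2, h3, h4⟩
  · push_neg at hcase
    have hxley : x ≤ y := hxjn.trans hxy
    have hxney : x ≠ y := fun h => hx (h ▸ hy)
    by_cases hje : jn x = y
    · have hcov : x ⋖ y := by
        refine ⟨lt_of_le_of_ne hxley hxney, ?_⟩
        intro u hxu huy
        have hqu : q ≤ u := hcase u hxu huy.le
        have hju : jn x ≤ u := (hjn x).2 ⟨hxu.le, hqu⟩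
        exact absurd (hje ▸ hju) (not_le_of_gt huy)
      exact ⟨x, hx, le_refl x, hΓ.1 hcov, hje⟩
    · exfalso
      have hjlt : jn x < y := lt_of_le_of_ne hxy hje
      have h0 : intervalEulerSum ρ x y = 0 :=
        hΓ.2.2 x y (lt_of_le_of_ne hxley hxney)
      have h0' : intervalEulerSum ρ (jn x) y = 0 := hΓ.2.2 _ _ hjlt
      rw [hsum] at h0 h0'
      have hAins : Finset.univ.filter (fun w => x ≤ w ∧ w ≤ y) =
          insert x (Finset.univ.filter (fun w => jn x ≤ w ∧ w ≤ y)) := by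
        ext w
        simp only [Finset.mem_insert, Finset.mem_filter, Finset.mem_univ, true_and]
        constructor
        · rintro ⟨h1, h2⟩
          rcases eq_or_lt_of_le h1 with h | h
          · exact Or.inl h.symm
          · exact Or.inr ⟨(hjn x).2 ⟨h1, hcase w h h2⟩, h2⟩
        · rintro (rfl | ⟨h1, h2⟩)
          · exact ⟨le_refl _, hxley⟩
          · exact ⟨hxjn.trans h1, h2⟩
      have hxnot : x ∉ Finset.univ.filter (fun w => jn x ≤ w ∧ w ≤ y) := by
        simp only [Finset.mem_filter, Finset.mem_univ, true_and, not_and]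
        intro h1 _
        exact hx ((hjn x).1.2.trans h1)
      rw [hAins, Finset.sum_insert hxnot, h0', add_zero] at h0
      exact zpow_ne_zero (ρ x) (by norm_num : (-1 : ℚ) ≠ 0) h0

/-- Let `Γ` be a finite lower Eulerian poset, `q ≠ 0̂_Γ` join-admissible
(with join function `jn`), `X = Γ ∖ Γ_{≥q}`, `Y = Γ_{≥q}`, `σ̂(x) = x ∨ q`. Then for all
`x ∈ X`, `y ∈ Y` with `σ̂(x) ≤ y` there is `x' ∈ X` with `x ≤ x'`, `ρ_Γ(y) - ρ_Γ(x') = 1`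
and `σ̂(x') = y`; in particular `σ̂` is strongly surjective for the restricted rank
functions `ρ_Γ` on `X` and `ρ_Γ - 1` on `Y`. -/
theorem joinMap_stronglySurjective {Γ : Type*} [PartialOrder Γ] [Finite Γ]
    (ρ : Γ → ℤ) (hΓ : LowerEulerian ρ)
    (b : Γ) (hb : ∀ z : Γ, b ≤ z) (q : Γ) (hq : q ≠ b)
    (jn : Γ → Γ) (hjn : ∀ z : Γ, IsLeast {w : Γ | z ≤ w ∧ q ≤ w} (jn z)) :
    (∀ x : Γ, ¬ q ≤ x → ∀ y : Γ, q ≤ y → jn x ≤ y →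
      ∃ x' : Γ, ¬ q ≤ x' ∧ x ≤ x' ∧ ρ y - ρ x' = 1 ∧ jn x' = y) ∧
    StronglySurjective (fun x : {z : Γ // ¬ q ≤ z} => ρ x.1)
      (fun y : {z : Γ // q ≤ z} => ρ y.1 - 1)
      (fun x : {z : Γ // ¬ q ≤ z} => (⟨jn x.1, (hjn x.1).1.2⟩ : {z : Γ // q ≤ z})) := by
  have key := key_join_lemma ρ hΓ q jn hjn
  have hbx : ¬ q ≤ b := fun h => hq (le_antisymm h (hb q))
  constructor
  · intro x hx y hy hxy
    obtain ⟨x', h1, h2, h3, h4⟩ := key x hx y hy hxy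
    exact ⟨x', h1, h2, by omega, h4⟩
  · constructor
    · intro y
      obtain ⟨x', h1, _, _, h4⟩ := key b hbx y.1 y.2 ((hjn b).2 ⟨hb y.1, y.2⟩)
      exact ⟨⟨x', h1⟩, Subtype.ext h4⟩
    · intro x y hle
      obtain ⟨x', h1, h2, h3, h4⟩ :=
        key x.1 x.2 y.1 y.2 (Subtype.coe_le_coe.mpr hle)
      refine ⟨⟨x', h1⟩, h2, ?_, Subtype.ext h4⟩
      show ρ x' = ρ y.1 - 1
      omega

end SFSPaper
end

section
/- Let σ : X → Y be a strong formal subdivision between finite lower Eulerian posets X and Y with rank functions ρ_X and ρ_Y. Then rank(Cyl(σ)) = rank(X) + 1. Moreover, X is graded if and only if Y is graded, if and only if Cyl(σ) is graded. -/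
namespace SFSPaper

variable {α β : Type*}

variable {α β : Type*}

attribute [-instance] Sum.instPartialOrder Sum.instPreorderSum Sum.instLESum Sum.instLTSum

section General

variable [PartialOrder α] [Finite α] {ρ : α → ℤ}

theorem rank_lt_s9 (hρ : IsRankFunction ρ) : ∀ ⦃x x' : α⦄, x < x' → ρ x < ρ x' := by
  have wf : WellFoundedGT α := Finite.to_wellFoundedGT
  intro x
  induction x using WellFounded.induction wf.wf with
  | _ x ih =>
    intro x' hx'
    obtain ⟨z, hz, hzle⟩ := exists_covBy_le_of_lt hx'
    rcases eq_or_lt_of_le hzle with rfl | hlt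
    · rw [hρ hz]; omega
    · have h1 := ih z hz.lt hlt
      have h2 := hρ hz
      omega

theorem rank_mono (hρ : IsRankFunction ρ) ⦃x x' : α⦄ (h : x ≤ x') : ρ x ≤ ρ x' := by
  rcases eq_or_lt_of_le h with rfl | h
  · exact le_rfl
  · exact (rank_lt_s9 hρ h).le

theorem exists_strict_list (hρ : IsRankFunction ρ) :
    ∀ (n : ℕ) (x m : α), x ≤ m → (ρ m - ρ x).toNat = n →
      ∃ l : List α, l.Chain' (· < ·) ∧ l.length = n + 1 ∧ l.head? = some x := by
  intro n
  induction n with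
  | zero => intro x m _ _; exact ⟨[x], List.isChain_singleton x, by simp, rfl⟩
  | succ n ih =>
    intro x m hxm hn
    have hlt : x < m := by
      rcases eq_or_lt_of_le hxm with rfl | h
      · simp at hn
      · exact h
    obtain ⟨z, hz, hzm⟩ := exists_covBy_le_of_lt hlt
    have hρz : ρ z = ρ x + 1 := hρ hz
    have h1 : ρ z ≤ ρ m := rank_mono hρ hzm
    have hzm' : (ρ m - ρ z).toNat = n := by omega
    obtain ⟨l, hc, hlen, hhead⟩ := ih z m hzm hzm'
    refine ⟨x :: l, ?_, by simp [hlen], rfl⟩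
    refine List.isChain_cons.2 ⟨fun y hy => ?_, hc⟩
    rw [hhead] at hy
    cases hy
    exact hz.lt

theorem exists_strict_fin (hρ : IsRankFunction ρ) (n : ℕ) (x m : α) (hxm : x ≤ m)
    (hn : (ρ m - ρ x).toNat = n) : ∃ c : Fin (n + 1) → α, StrictMono c := by
  obtain ⟨l, hc, hlen, -⟩ := exists_strict_list hρ n x m hxm hn
  have hs : l.Pairwise (· < ·) := List.isChain_iff_pairwise.1 hc
  refine ⟨fun i => l.get ⟨i, by omega⟩, fun i j hij => ?_⟩
  exact hs.rel_get_of_lt (by exact hij)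

theorem strictMono_rank_span {n : ℕ} (hρ : IsRankFunction ρ) (c : Fin (n + 1) → α)
    (hc : StrictMono c) : (n : ℤ) ≤ ρ (c (Fin.last n)) - ρ (c 0) := by
  induction n with
  | zero => simp
  | succ n ih =>
    have h1 : (n : ℤ) ≤ ρ (c (Fin.last n).castSucc) - ρ (c ((0 : Fin (n + 1)).castSucc)) :=
      ih (fun i => c i.castSucc) (fun i j hij => hc (by simpa using hij))
    have h2 : ρ (c (Fin.last n).castSucc) < ρ (c (Fin.last (n + 1))) :=
      rank_lt_s9 hρ (hc (Fin.castSucc_lt_last _))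
    rw [Fin.castSucc_zero] at h1
    push_cast
    omega

theorem posetRank_eq (hρ : IsRankFunction ρ) {b : α} (hb : ∀ z, b ≤ z) {m : α}
    (hm : ∀ z, ρ z ≤ ρ m) : (posetRank α : ℤ) = ρ m - ρ b := by
  have hbm : ρ b ≤ ρ m := hm b
  have hgt : IsGreatest {n : ℕ | ∃ c : Fin (n + 1) → α, StrictMono c} (ρ m - ρ b).toNat := by
    constructor
    · exact exists_strict_fin hρ _ b m (hb m) rfl
    · rintro n ⟨c, hc⟩
      have h1 := strictMono_rank_span hρ c hc
      have h2 := hm (c (Fin.last n))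
      have h3 := hb (c 0)
      have h4 := rank_mono hρ h3
      omega
  rw [posetRank, hgt.csSup_eq]
  omega

theorem maxChain_ncard (hρ : IsRankFunction ρ) {b : α} (hb : ∀ z, b ≤ z) {s : Set α}
    (hs : IsMaxChain (· ≤ ·) s) :
    ∃ m, m ∈ s ∧ (∀ z, m ≤ z → z = m) ∧ (∀ e ∈ s, e ≤ m) ∧
      (s.ncard : ℤ) = ρ m - ρ b + 1 := by
  obtain ⟨hsc, hmax⟩ := hs
  -- any element comparable to all of s is in s
  have hmem : ∀ w : α, (∀ e ∈ s, e ≤ w ∨ w ≤ e) → w ∈ s := by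
    intro w hw
    have hins : IsChain (· ≤ ·) (insert w s) :=
      hsc.insert fun e he _ => (hw e he).symm
    have := hmax hins (Set.subset_insert w s)
    rw [this]; exact Set.mem_insert w s
  have hbs : b ∈ s := hmem b fun e he => Or.inr (hb e)
  have hfin : s.Finite := Set.toFinite s
  have hne : s.Nonempty := ⟨b, hbs⟩
  -- greatest element of s
  obtain ⟨m, hms, hm1⟩ := Set.Finite.exists_maximalFor id s hfin hne
  have hmg : ∀ e ∈ s, e ≤ m := by
    intro e he
    rcases hsc.total he hms with h | h
    · exact h
    · exact (hm1 he h).ge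
  -- m is maximal in α
  have hmtop : ∀ z, m ≤ z → z = m := by
    intro z hz
    have hzs : z ∈ s := hmem z fun e he => Or.inl ((hmg e he).trans hz)
    exact le_antisymm (hmg z hzs) hz
  -- covering property inside s
  have hcov : ∀ e ∈ s, ∀ e' ∈ s, e < e' → (∀ f ∈ s, ¬(e < f ∧ f < e')) → e ⋖ e' := by
    intro e he e' he' hlt hbetween
    refine ⟨hlt, fun w hw hw' => ?_⟩
    have hws : w ∈ s := by
      refine hmem w fun f hf => ?_
      rcases hsc.total hf he with h | h
      · exact Or.inl (h.trans hw.le)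
      rcases hsc.total hf he' with h' | h'
      swap
      · exact Or.inr (hw'.le.trans h')
      rcases eq_or_lt_of_le h with rfl | h2
      · exact Or.inl hw.le
      rcases eq_or_lt_of_le h' with rfl | h2'
      · exact Or.inr hw'.le
      exact ((hbetween f hf) ⟨h2, h2'⟩).elim
    exact hbetween w hws ⟨hw, hw'⟩
  -- the image of s under ρ is exactly Icc (ρ b) (ρ m)
  have himg : ρ '' s = Set.Icc (ρ b) (ρ m) := by
    apply Set.Subset.antisymm
    · rintro k ⟨e, he, rfl⟩
      exact ⟨rank_mono hρ (hb e), rank_mono hρ (hmg e he)⟩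
    · rintro k ⟨hk1, hk2⟩
      by_contra hk
      -- greatest element of T = {e ∈ s | ρ e ≤ k}
      have hTne : (({e ∈ s | ρ e ≤ k}) : Set α).Nonempty := ⟨b, hbs, hk1⟩
      obtain ⟨e, ⟨hes, hek⟩, he1⟩ :=
        Set.Finite.exists_maximalFor id {e ∈ s | ρ e ≤ k} (Set.toFinite _) hTne
      have heg : ∀ f ∈ s, ρ f ≤ k → f ≤ e := by
        intro f hf hfk
        rcases hsc.total hf hes with h | h
        · exact h
        · exact (he1 ⟨hf, hfk⟩ h).ge
      have hek' : ρ e < k := by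
        rcases lt_or_eq_of_le hek with h | h
        · exact h
        · exact absurd ⟨e, hes, h⟩ hk
      have hem : e < m := by
        rcases eq_or_lt_of_le (hmg e hes) with rfl | h
        · omega
        · exact h
      -- least element of U = {f ∈ s | e < f}
      obtain ⟨e', ⟨he's, he'e⟩, he'1⟩ :=
        Set.Finite.exists_minimalFor id {f ∈ s | e < f} (Set.toFinite _) ⟨m, hms, hem⟩
      have hcov' : e ⋖ e' := by
        refine hcov e hes e' he's he'e fun f hf ⟨h1, h2⟩ => ?_
        exact absurd (he'1 ⟨hf, h1⟩ h2.le) (by intro hc; simp only [id_eq] at hc; exact not_le_of_gt h2 hc)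
      have : ρ e' = ρ e + 1 := hρ hcov'
      have : e' ≤ e := heg e' he's (by omega)
      exact absurd this (not_le_of_gt he'e)
  have hinj : Set.InjOn ρ s := by
    intro e he f hf hef
    rcases hsc.total he hf with h | h
    · rcases eq_or_lt_of_le h with h' | h'
      · exact h'
      · exact absurd hef (by have := rank_lt_s9 hρ h'; omega)
    · rcases eq_or_lt_of_le h with h' | h'
      · exact h'.symm
      · exact absurd hef (by have := rank_lt_s9 hρ h'; omega)
  have hcard : s.ncard = (Set.Icc (ρ b) (ρ m)).ncard := by
    rw [← himg, Set.ncard_image_of_injOn hinj]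
  refine ⟨m, hms, hmtop, hmg, ?_⟩
  rw [hcard, ← Finset.coe_Icc, Set.ncard_coe_finset, Int.card_Icc]
  have : ρ b ≤ ρ m := rank_mono hρ (hb m)
  omega

theorem graded_iff (hρ : IsRankFunction ρ) {b : α} (hb : ∀ z, b ≤ z) :
    GradedPoset α ↔
      ∀ m m' : α, (∀ z, m ≤ z → z = m) → (∀ z, m' ≤ z → z = m') → ρ m = ρ m' := by
  constructor
  · intro hg m m' hm hm'
    obtain ⟨s, hs, hmsub⟩ := (Set.subsingleton_singleton (a := m)).isChain.exists_maxChain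
    obtain ⟨t, ht, hmsub'⟩ := (Set.subsingleton_singleton (a := m')).isChain.exists_maxChain
    obtain ⟨p, hps, hptop, hpg, hpcard⟩ := maxChain_ncard hρ hb hs
    obtain ⟨q, hqs, hqtop, hqg, hqcard⟩ := maxChain_ncard hρ hb ht
    have hpm : p = m := hm p (hpg m (hmsub rfl))
    have hqm : q = m' := hm' q (hqg m' (hmsub' rfl))
    subst hpm hqm
    have := hg s t hs ht
    omega
  · intro h s t hst htt
    obtain ⟨p, -, hptop, -, hpcard⟩ := maxChain_ncard hρ hb hst
    obtain ⟨q, -, hqtop, -, hqcard⟩ := maxChain_ncard hρ hb htt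
    have := h p q hptop hqtop
    omega

end General

/-- For a strong formal subdivision `σ : X → Y` between finite lower
Eulerian posets, `rank(Cyl(σ)) = rank(X) + 1`; moreover `X` is graded iff `Y` is graded
iff `Cyl(σ)` is graded. -/
theorem cyl_rank_and_graded {X Y : Type*} [PartialOrder X] [PartialOrder Y]
    [Finite X] [Finite Y]
    (ρX : X → ℤ) (ρY : Y → ℤ)
    (hX : LowerEulerian ρX) (hY : LowerEulerian ρY)
    (σ : X → Y) (hσ : StrongFormalSubdivision ρX ρY σ) :
    @posetRank (X ⊕ Y) (cylPartialOrder σ hσ.1).toPreorder = posetRank X + 1 ∧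
    (GradedPoset X ↔ GradedPoset Y) ∧
    (GradedPoset X ↔ @GradedPoset (X ⊕ Y) (cylPartialOrder σ hσ.1).toPreorder) := by
  classical
  obtain ⟨hρX, ⟨bX, hbX⟩, -⟩ := hX
  obtain ⟨hρY, ⟨bY, hbY⟩, -⟩ := hY
  have hmono : Monotone σ := hσ.1
  have hri := hσ.2.1
  have hsurj := hσ.2.2.1.1
  have hss := hσ.2.2.1.2
  -- σ bX is below everything in Y
  have hσb : ∀ y, σ bX ≤ y := by
    intro y; obtain ⟨x, rfl⟩ := hsurj y; exact hmono (hbX x)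
  -- maximal elements of X map to maximal elements of Y of the same rank
  have fmax1 : ∀ x : X, (∀ z, x ≤ z → z = x) →
      ρX x = ρY (σ x) ∧ ∀ w, σ x ≤ w → w = σ x := by
    intro x hx
    constructor
    · obtain ⟨x', hx', hr, -⟩ := hss x (σ x) le_rfl
      rw [hx x' hx'] at hr
      exact hr
    · intro w hw
      obtain ⟨x', hx', -, hs⟩ := hss x w hw
      rw [← hs, hx x' hx']
  -- maximal elements of Y are images of maximal elements of X of the same rank
  have fmax2 : ∀ y : Y, (∀ z, y ≤ z → z = y) →
      ∃ x, σ x = y ∧ ρX x = ρY y ∧ ∀ z, x ≤ z → z = x := by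
    intro y hy
    obtain ⟨x, -, hr, hs⟩ := hss bX y (hσb y)
    refine ⟨x, hs, hr, fun z hz => ?_⟩
    have h1 : σ z = y := hy (σ z) (hs ▸ hmono hz)
    have h2 : ρX z ≤ ρY y := h1 ▸ hri z
    rcases eq_or_lt_of_le hz with h | h
    · exact h.symm
    · exact absurd (rank_lt_s9 hρX h) (by omega)
  -- an element of maximal rank in X
  obtain ⟨mX, -, hmX'⟩ := Set.Finite.exists_maximalFor ρX Set.univ (Set.toFinite _)
    ⟨bX, trivial⟩
  have hmX : ∀ x, ρX x ≤ ρX mX := by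
    intro x
    by_contra h
    push_neg at h
    have := hmX' trivial h.le
    omega
  have hmXmax : ∀ z, mX ≤ z → z = mX := by
    intro z hz
    rcases eq_or_lt_of_le hz with h | h
    · exact h.symm
    · exact absurd (rank_lt_s9 hρX h) (by have := hmX z; omega)
  obtain ⟨hrmX, hσmXmax⟩ := fmax1 mX hmXmax
  have hYsup : ∀ y, ρY y ≤ ρY (σ mX) := by
    intro y
    obtain ⟨x, -, hr, -⟩ := hss bX y (hσb y)
    rw [← hrmX, ← hr]; exact hmX x
  -- set up the cylinder order
  letI : PartialOrder (X ⊕ Y) := cylPartialOrder σ hσ.1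
  have hcb : ∀ z : X ⊕ Y, (Sum.inl bX : X ⊕ Y) ≤ z := by
    rintro (x | y)
    · exact hbX x
    · exact hσb y
  -- cylRank is a rank function on the cylinder
  have hcρ : IsRankFunction (cylRank ρX ρY) := by
    rintro (x | y) (x' | y') hcov
    · have hlt : x < x' :=
        lt_iff_le_not_ge.2 ⟨hcov.1.le, fun h => (lt_iff_le_not_ge.1 hcov.1).2 h⟩
      have hx : x ⋖ x' := by
        refine ⟨hlt, fun w hw hw' => ?_⟩
        exact hcov.2 (c := Sum.inl w)
          (lt_iff_le_not_ge.2 ⟨hw.le, fun h => hw.not_ge h⟩)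
          (lt_iff_le_not_ge.2 ⟨hw'.le, fun h => hw'.not_ge h⟩)
      simpa [cylRank] using hρX hx
    · -- inl x ⋖ inr y'
      have hle : σ x ≤ y' := hcov.1.le
      have hxy : σ x = y' := by
        by_contra hne
        have h1 : (Sum.inl x : X ⊕ Y) < Sum.inr (σ x) :=
          lt_iff_le_not_ge.2 ⟨le_refl (σ x), fun h => h⟩
        have h2 : (Sum.inr (σ x) : X ⊕ Y) < Sum.inr y' :=
          lt_iff_le_not_ge.2 ⟨hle, fun h => (hle.lt_of_ne hne).not_ge h⟩
        exact hcov.2 h1 h2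
      obtain ⟨x', hx', hr, hs⟩ := hss x (σ x) le_rfl
      have hxx' : x' = x := by
        by_contra hne
        have hlt : x < x' := lt_of_le_of_ne hx' (Ne.symm hne)
        have h1 : (Sum.inl x : X ⊕ Y) < Sum.inl x' :=
          lt_iff_le_not_ge.2 ⟨hlt.le, fun h => hlt.not_ge h⟩
        have h2 : (Sum.inl x' : X ⊕ Y) < Sum.inr y' :=
          lt_iff_le_not_ge.2 ⟨show σ x' ≤ y' from hs ▸ hle, fun h => h⟩
        exact hcov.2 h1 h2
      rw [hxx'] at hr
      simp only [cylRank, Sum.elim_inl, Sum.elim_inr]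
      rw [← hxy, ← hr]
    · exact (hcov.1.le).elim
    · have hlt : y < y' :=
        lt_iff_le_not_ge.2 ⟨hcov.1.le, fun h => (lt_iff_le_not_ge.1 hcov.1).2 h⟩
      have hy : y ⋖ y' := by
        refine ⟨hlt, fun w hw hw' => ?_⟩
        exact hcov.2 (c := Sum.inr w)
          (lt_iff_le_not_ge.2 ⟨hw.le, fun h => hw.not_ge h⟩)
          (lt_iff_le_not_ge.2 ⟨hw'.le, fun h => hw'.not_ge h⟩)
      have := hρY hy
      simp only [cylRank, Sum.elim_inr]
      omega
  -- top rank element of the cylinder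
  have hcsup : ∀ z : X ⊕ Y, cylRank ρX ρY z ≤ cylRank ρX ρY (Sum.inr (σ mX)) := by
    rintro (x | y)
    · simp only [cylRank, Sum.elim_inl, Sum.elim_inr]
      have := hmX x
      omega
    · simp only [cylRank, Sum.elim_inr]
      have := hYsup y
      omega
  have hrankCyl : (posetRank (X ⊕ Y) : ℤ) = (ρY (σ mX) + 1) - ρX bX := by
    have h := posetRank_eq hcρ hcb hcsup
    simpa [cylRank] using h
  have hrankX : (posetRank X : ℤ) = ρX mX - ρX bX := posetRank_eq hρX hbX hmX
  refine ⟨by omega, ?_, ?_⟩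
  · -- X graded ↔ Y graded
    rw [graded_iff hρX hbX, graded_iff hρY hbY]
    constructor
    · intro h y y' hy hy'
      obtain ⟨x, -, hr, hxmax⟩ := fmax2 y hy
      obtain ⟨x', -, hr', hx'max⟩ := fmax2 y' hy'
      rw [← hr, ← hr']
      exact h x x' hxmax hx'max
    · intro h x x' hx hx'
      obtain ⟨hr, hm1⟩ := fmax1 x hx
      obtain ⟨hr', hm2⟩ := fmax1 x' hx'
      rw [hr, hr']
      exact h _ _ hm1 hm2
  · -- X graded ↔ Cyl graded
    rw [graded_iff hρX hbX, graded_iff hcρ hcb]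
    constructor
    · intro h z z' hz hz'
      obtain ⟨y, rfl, hy⟩ : ∃ y, z = Sum.inr y ∧ ∀ w, y ≤ w → w = y := by
        match z, hz with
        | Sum.inl x, hz =>
          have := hz (Sum.inr (σ x)) (le_refl (σ x))
          simp at this
        | Sum.inr y, hz =>
          exact ⟨y, rfl, fun w hw => Sum.inr.inj (hz (Sum.inr w) hw)⟩
      obtain ⟨y', rfl, hy'⟩ : ∃ y', z' = Sum.inr y' ∧ ∀ w, y' ≤ w → w = y' := by
        match z', hz' with
        | Sum.inl x, hz' =>
          have := hz' (Sum.inr (σ x)) (le_refl (σ x))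
          simp at this
        | Sum.inr y', hz' =>
          exact ⟨y', rfl, fun w hw => Sum.inr.inj (hz' (Sum.inr w) hw)⟩
      obtain ⟨x, -, hr, hxmax⟩ := fmax2 y hy
      obtain ⟨x', -, hr', hx'max⟩ := fmax2 y' hy'
      have := h x x' hxmax hx'max
      simp only [cylRank, Sum.elim_inr]
      omega
    · intro h x x' hx hx'
      obtain ⟨hr, hm1⟩ := fmax1 x hx
      obtain ⟨hr', hm2⟩ := fmax1 x' hx'
      have hcm : ∀ (u : Y), (∀ w, u ≤ w → w = u) →
          ∀ w : X ⊕ Y, (Sum.inr u : X ⊕ Y) ≤ w → w = Sum.inr u := by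
        intro u hu
        rintro (xx | ww) hw
        · exact (hw).elim
        · exact congrArg Sum.inr (hu ww hw)
      have := h (Sum.inr (σ x)) (Sum.inr (σ x')) (hcm _ hm1) (hcm _ hm2)
      simp only [cylRank, Sum.elim_inr] at this
      omega


end SFSPaper
end

section
/- Let Γ be a finite lower Eulerian poset with rank function ρ_Γ, and suppose Γ contains a join-admissible element q with q ≠ 0̂_Γ. Then Γ has as many elements of even ρ_Γ-rank as of odd ρ_Γ-rank, i.e. ∑_{z ∈ Γ} (−1)^{ρ_Γ(z)} = 0. In particular, |Γ| is even. -/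
namespace SFSPaper

variable {α β : Type*}

/-- A finite lower Eulerian poset containing a join-admissible element
`q ≠ 0̂_Γ` has as many elements of even rank as of odd rank; in particular its cardinality
is even. -/
theorem eulerSum_eq_zero_of_joinAdmissible {Γ : Type*} [PartialOrder Γ] [Finite Γ]
    (ρ : Γ → ℤ) (hΓ : LowerEulerian ρ)
    (b : Γ) (hb : ∀ z : Γ, b ≤ z) (q : Γ) (hq : q ≠ b) (hqa : JoinAdmissible q) :
    (∑ᶠ z : Γ, (-1 : ℚ) ^ ρ z) = 0 ∧ Even (Nat.card Γ) := by
  classical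
  cases nonempty_fintype Γ
  choose j hj using hqa
  have hjz : ∀ z, z ≤ j z := fun z => (hj z).1.1
  have hjq : ∀ z, q ≤ j z := fun z => (hj z).1.2
  have hjle : ∀ z w, z ≤ w → q ≤ w → j z ≤ w := fun z w h1 h2 => (hj z).2 ⟨h1, h2⟩
  set f : Γ → ℚ := fun w => ∑ z ∈ Finset.univ.filter (fun z => j z = w), (-1:ℚ) ^ ρ z with hf
  have hbq : b < q := lt_of_le_of_ne (hb q) (Ne.symm hq)
  -- g w = 0 for q ≤ w
  have hg : ∀ w, q ≤ w → ∑ z ∈ Finset.univ.filter (fun z => z ≤ w), (-1:ℚ) ^ ρ z = 0 := by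
    intro w hw
    have h0 := hΓ.2.2 b w (lt_of_lt_of_le hbq hw)
    rw [intervalEulerSum] at h0
    rw [← h0]
    refine (finsum_cond_eq_sum_of_cond_iff _ ?_).symm
    intro x _
    simp [hb x]
  -- claim A: for q ≤ w, sum of f over [q,w] is 0
  have hA : ∀ w, q ≤ w →
      ∑ w' ∈ Finset.univ.filter (fun w' => q ≤ w' ∧ w' ≤ w), f w' = 0 := by
    intro w hw
    have hmap : ∀ z ∈ Finset.univ.filter (fun z => z ≤ w),
        j z ∈ Finset.univ.filter (fun w' => q ≤ w' ∧ w' ≤ w) := by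
      intro z hz
      simp only [Finset.mem_filter, Finset.mem_univ, true_and] at hz ⊢
      exact ⟨hjq z, hjle z w hz hw⟩
    have hfib := Finset.sum_fiberwise_of_maps_to hmap (fun z => (-1:ℚ) ^ ρ z)
    rw [hg w hw] at hfib
    rw [← hfib]
    refine Finset.sum_congr rfl ?_
    intro w' hw'
    simp only [Finset.mem_filter, Finset.mem_univ, true_and] at hw'
    refine Finset.sum_congr ?_ (fun _ _ => rfl)
    ext z
    simp only [Finset.mem_filter, Finset.mem_univ, true_and]
    exact ⟨fun h => ⟨le_trans (h ▸ hjz z) hw'.2, h⟩, fun h => h.2⟩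
  -- claim C: f w = 0 for q ≤ w
  have hC : ∀ w, q ≤ w → f w = 0 := by
    intro w
    induction w using WellFoundedLT.induction with
    | _ x IH =>
      intro hqx
      have hxmem : x ∈ Finset.univ.filter (fun w' => q ≤ w' ∧ w' ≤ x) := by
        simp [hqx]
      have h1 := Finset.sum_erase_add _ f hxmem
      rw [hA x hqx] at h1
      have h2 : ∑ w' ∈ (Finset.univ.filter (fun w' => q ≤ w' ∧ w' ≤ x)).erase x, f w' = 0 := by
        refine Finset.sum_eq_zero ?_
        intro w' hw'
        simp only [Finset.mem_erase, Finset.mem_filter, Finset.mem_univ, true_and] at hw'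
        exact IH w' (lt_of_le_of_ne hw'.2.2 hw'.1) hw'.2.1
      linarith [h1, h2]
  -- total sum
  have htotal : ∑ z : Γ, (-1:ℚ) ^ ρ z = 0 := by
    rw [← Finset.sum_fiberwise_of_maps_to (g := j) (t := Finset.univ.filter (fun w' => q ≤ w'))
      (fun z _ => by simp [hjq z]) (fun z => (-1:ℚ) ^ ρ z)]
    refine Finset.sum_eq_zero ?_
    intro w' hw'
    simp only [Finset.mem_filter, Finset.mem_univ, true_and] at hw'
    exact hC w' hw'
  constructor
  · rw [finsum_eq_sum_of_fintype]; exact htotal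
  · -- evenness
    have h1 : ∑ z ∈ Finset.univ.filter (fun z : Γ => Even (ρ z)), (-1:ℚ) ^ ρ z
        = ((Finset.univ.filter (fun z : Γ => Even (ρ z))).card : ℚ) := by
      rw [Finset.sum_congr rfl (fun z hz => ((Finset.mem_filter.1 hz).2).neg_one_zpow)]
      simp
    have h2 : ∑ z ∈ Finset.univ.filter (fun z : Γ => ¬ Even (ρ z)), (-1:ℚ) ^ ρ z
        = -((Finset.univ.filter (fun z : Γ => ¬ Even (ρ z))).card : ℚ) := by
      rw [Finset.sum_congr rfl
        (fun z hz => (Int.not_even_iff_odd.1 (Finset.mem_filter.1 hz).2).neg_one_zpow)]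
      simp
    have hsplit := Finset.sum_filter_add_sum_filter_not Finset.univ
      (fun z : Γ => Even (ρ z)) (fun z => (-1:ℚ) ^ ρ z)
    rw [h1, h2, htotal] at hsplit
    have hEO : (Finset.univ.filter (fun z : Γ => Even (ρ z))).card
        = (Finset.univ.filter (fun z : Γ => ¬ Even (ρ z))).card := by
      have : ((Finset.univ.filter (fun z : Γ => Even (ρ z))).card : ℚ)
          = ((Finset.univ.filter (fun z : Γ => ¬ Even (ρ z))).card : ℚ) := by linarith
      exact_mod_cast this
    have hcard : Nat.card Γ = (Finset.univ.filter (fun z : Γ => Even (ρ z))).card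
        + (Finset.univ.filter (fun z : Γ => ¬ Even (ρ z))).card := by
      rw [Nat.card_eq_fintype_card, ← Finset.card_univ,
        ← Finset.card_filter_add_card_filter_not (s := (Finset.univ : Finset Γ))
          (fun z : Γ => Even (ρ z))]
    rw [hcard, hEO]
    exact ⟨_, rfl⟩


end SFSPaper
end

section
/- Let σ : X → Y be a strong formal subdivision between finite lower Eulerian posets X and Y with rank functions ρ_X and ρ_Y. Let X̄ (respectively Ȳ) denote the poset obtained from X (respectively Y) by adjoining a new maximal element. Then X̄ is Eulerian (i.e. admits a rank function making it Eulerian) if and only if Ȳ is Eulerian. -/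
namespace SFSPaper

variable {α β : Type*}

/-! ### Auxiliary material for the proof of Statement 11 -/

open Finset

private lemma negQ : (-1 : ℚ) ≠ 0 := by norm_num

private lemma negOne_zpow_congr {m k : ℤ} (h : Even (m - k)) :
    (-1 : ℚ) ^ m = (-1 : ℚ) ^ k := by
  have hm : m = (m - k) + k := by ring
  rw [hm, zpow_add₀ negQ, h.neg_one_zpow, one_mul]

private lemma finsum_cond_eq_sum {α : Type*} [Fintype α] (p : α → Prop) [DecidablePred p]
    (f : α → ℚ) :
    (∑ᶠ (w : α) (_ : p w), f w) = ∑ w ∈ Finset.univ.filter p, f w :=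
  finsum_cond_eq_sum_of_cond_iff f (fun {x} _ => by simp)

/-- Any two rank functions on a finite poset with a least element differ by a constant. -/
private lemma rank_eq_of_least {α : Type*} [PartialOrder α] [Finite α] {ρ ρ' : α → ℤ}
    (h : IsRankFunction ρ) (h' : IsRankFunction ρ') {b : α} (hb : ∀ z, b ≤ z) :
    ∀ z, ρ z - ρ b = ρ' z - ρ' b := by
  intro z
  induction z using WellFoundedLT.induction with
  | ind z ih =>
    rcases eq_or_lt_of_le (hb z) with hbz | hbz
    · rw [← hbz]; ring
    · obtain ⟨w, hw, hwmax⟩ :=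
        Set.Finite.exists_maximalFor id {w : α | w < z} (Set.toFinite _) ⟨b, hbz⟩
      have hcov : w ⋖ z := ⟨hw, fun c hwc hcz => lt_irrefl w (hwc.trans_le (hwmax hcz hwc.le))⟩
      rw [h hcov, h' hcov]
      have := ih w hw
      omega

/-- The alternating sum over the "upper set" of `z`. -/
noncomputable def upSum {α : Type*} [Preorder α] (ρ : α → ℤ) (z : α) : ℚ :=
  ∑ᶠ (w : α) (_ : z ≤ w), (-1 : ℚ) ^ ρ w

/-- Splitting a filtered sum over `WithTop α` into the top term and the rest. -/
private lemma sum_filter_withTop {α : Type*} [Fintype α]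
    (p : WithTop α → Prop) [DecidablePred p] (f : WithTop α → ℚ)
    [DecidablePred fun x : α => p ↑x] :
    haveI : Fintype (WithTop α) := instFintypeOption
    ∑ w ∈ Finset.univ.filter p, f w
      = (if p ⊤ then f ⊤ else 0) + ∑ x ∈ Finset.univ.filter (fun x : α => p ↑x), f ↑x := by
  letI : Fintype (WithTop α) := instFintypeOption
  rw [Finset.sum_filter (s := Finset.univ) p f,
      Finset.sum_filter (s := Finset.univ) (fun x : α => p ↑x) (fun x => f ↑x)]
  refine (Fintype.sum_option (α := α) (fun w : WithTop α => if p w then f w else 0)).trans ?_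
  congr
  funext x
  congr

/-- The fiber sum identity of a strong formal subdivision, in terms of `(-1)^ρX`. -/
private lemma fiber_sum {X Y : Type*} [PartialOrder X] [PartialOrder Y] [Fintype X]
    {ρX : X → ℤ} {ρY : Y → ℤ} {σ : X → Y} (hσ : StrongFormalSubdivision ρX ρY σ)
    (x : X) (y : Y) (hxy : σ x ≤ y) :
    (∑ᶠ (x' : X) (_ : x ≤ x' ∧ σ x' = y), (-1 : ℚ) ^ ρX x') = (-1 : ℚ) ^ ρY y := by
  classical
  have h := hσ.2.2.2 x y hxy
  rw [finsum_cond_eq_sum] at h ⊢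
  calc ∑ x' ∈ Finset.univ.filter (fun x' => x ≤ x' ∧ σ x' = y), (-1 : ℚ) ^ ρX x'
      = ∑ x' ∈ Finset.univ.filter (fun x' => x ≤ x' ∧ σ x' = y),
          (-1 : ℚ) ^ ρY y * (-1 : ℚ) ^ (ρY y - ρX x') := by
        refine Finset.sum_congr rfl fun x' _ => ?_
        rw [← zpow_add₀ negQ]
        exact negOne_zpow_congr ⟨ρX x' - ρY y, by ring⟩
    _ = (-1 : ℚ) ^ ρY y *
          ∑ x' ∈ Finset.univ.filter (fun x' => x ≤ x' ∧ σ x' = y),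
            (-1 : ℚ) ^ (ρY y - ρX x') := by rw [Finset.mul_sum]
    _ = (-1 : ℚ) ^ ρY y := by rw [h, mul_one]

/-- Transport of upper alternating sums along a strong formal subdivision. -/
private lemma upSum_transport {X Y : Type*} [PartialOrder X] [PartialOrder Y]
    [Fintype X] [Fintype Y]
    {ρX : X → ℤ} {ρY : Y → ℤ} {σ : X → Y} (hσ : StrongFormalSubdivision ρX ρY σ)
    (z : X) : upSum ρX z = upSum ρY (σ z) := by
  classical
  rw [upSum, upSum, finsum_cond_eq_sum, finsum_cond_eq_sum]
  rw [← Finset.sum_fiberwise_of_maps_to (g := σ)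
      (t := Finset.univ.filter (fun y => σ z ≤ y))
      (fun w hw => by
        simp only [Finset.mem_filter, Finset.mem_univ, true_and] at hw ⊢
        exact hσ.1 hw)]
  refine Finset.sum_congr rfl fun y hy => ?_
  simp only [Finset.mem_filter, Finset.mem_univ, true_and] at hy
  have hfib := fiber_sum hσ z y hy
  rw [finsum_cond_eq_sum] at hfib
  rw [Finset.filter_filter]
  convert hfib using 2

/-- Characterization: `WithTop α` is Eulerian for some rank function iff all maximal
elements of `α` have the same rank `r` and all upper alternating sums equal `(-1)^r`. -/
private lemma withTop_eulerian_char {α : Type*} [PartialOrder α] [Fintype α] {ρX : α → ℤ}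
    (hX : LowerEulerian ρX) :
    (∃ ρ : WithTop α → ℤ, Eulerian ρ) ↔
      ∃ r : ℤ, (∀ z : α, IsMax z → ρX z = r) ∧ ∀ z : α, upSum ρX z = (-1 : ℚ) ^ r := by
  classical
  letI : Fintype (WithTop α) := instFintypeOption
  obtain ⟨b, hb⟩ := hX.2.1
  constructor
  · rintro ⟨ρ, ⟨⟨hrk, -, hint⟩, -⟩⟩
    set ρ' : α → ℤ := fun z => ρ ↑z with hρ'def
    have hrk' : IsRankFunction ρ' := fun z z' h => hrk (WithTop.coe_covBy_coe.2 h)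
    have hdiff : ∀ z, ρ' z - ρ' b = ρX z - ρX b := rank_eq_of_least hrk' hX.1 hb
    set c : ℤ := ρ' b - ρX b with hcdef
    have hρ'' : ∀ z, ρ' z = ρX z + c := fun z => by have := hdiff z; omega
    refine ⟨ρ ⊤ - 1 - c, ?_, ?_⟩
    · intro z hz
      have h1 : ρ ⊤ = ρ' z + 1 := hrk (WithTop.coe_covBy_top.2 hz)
      have h2 := hρ'' z
      omega
    · intro z
      have h0 := hint ↑z ⊤ (WithTop.coe_lt_top z)
      rw [intervalEulerSum, finsum_cond_eq_sum, sum_filter_withTop] at h0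
      have hiftrue : ((↑z : WithTop α) ≤ ⊤ ∧ (⊤ : WithTop α) ≤ ⊤) := ⟨le_top, le_top⟩
      rw [if_pos hiftrue] at h0
      have hfe : Finset.univ.filter (fun x : α => (↑z : WithTop α) ≤ ↑x ∧ (↑x : WithTop α) ≤ ⊤)
          = Finset.univ.filter (fun x : α => z ≤ x) := by
        ext x; simp
      rw [hfe] at h0
      have hU : ∑ x ∈ Finset.univ.filter (fun x : α => z ≤ x), (-1 : ℚ) ^ ρ (↑x : WithTop α)
          = (-1 : ℚ) ^ c * upSum ρX z := by
        rw [upSum, finsum_cond_eq_sum, Finset.mul_sum]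
        refine Finset.sum_congr rfl fun x _ => ?_
        have : ρ (↑x : WithTop α) = ρX x + c := hρ'' x
        rw [this, zpow_add₀ negQ, mul_comm]
      rw [hU] at h0
      have hT : (-1 : ℚ) ^ ρ ⊤ = (-1 : ℚ) ^ c * ((-1 : ℚ) ^ (ρ ⊤ - 1 - c) * (-1)) := by
        rw [← zpow_add_one₀ negQ, ← zpow_add₀ negQ]
        congr 1
        ring
      rw [hT] at h0
      have hcne : (-1 : ℚ) ^ c ≠ 0 := zpow_ne_zero _ negQ
      refine mul_left_cancel₀ hcne ?_
      linear_combination h0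
  · rintro ⟨r, hmaxr, hsum⟩
    set ρ : WithTop α → ℤ := fun w => WithTop.recTopCoe (r + 1) ρX w with hρdef
    have hρtop : ρ ⊤ = r + 1 := rfl
    have hρcoe : ∀ x : α, ρ ↑x = ρX x := fun _ => rfl
    refine ⟨ρ, ⟨⟨?_, ⟨↑b, ?_⟩, ?_⟩, ⟨⊤, fun z => le_top⟩⟩⟩
    · -- rank function
      intro z z' hcov
      induction z' using WithTop.recTopCoe with
      | top =>
        induction z using WithTop.recTopCoe with
        | top => exact absurd hcov.lt (lt_irrefl _)
        | coe x =>
          have hx : IsMax x := WithTop.coe_covBy_top.1 hcov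
          rw [hρtop, hρcoe, hmaxr x hx]
      | coe a' =>
        induction z using WithTop.recTopCoe with
        | top => exact absurd hcov.lt (by simp)
        | coe x =>
          rw [hρcoe, hρcoe]
          exact hX.1 (WithTop.coe_covBy_coe.1 hcov)
    · -- least element
      intro z
      induction z using WithTop.recTopCoe with
      | top => exact le_top
      | coe x => exact WithTop.coe_le_coe.2 (hb x)
    · -- interval sums
      intro z z' hlt
      induction z' using WithTop.recTopCoe with
      | top =>
        induction z using WithTop.recTopCoe with
        | top => exact absurd hlt (lt_irrefl _)
        | coe a =>
          rw [intervalEulerSum, finsum_cond_eq_sum, sum_filter_withTop]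
          rw [if_pos (⟨le_top, le_top⟩ : ((↑a : WithTop α) ≤ ⊤ ∧ (⊤ : WithTop α) ≤ ⊤))]
          have hfe : Finset.univ.filter
                (fun x : α => (↑a : WithTop α) ≤ ↑x ∧ (↑x : WithTop α) ≤ ⊤)
              = Finset.univ.filter (fun x : α => a ≤ x) := by
            ext x; simp
          rw [hfe]
          have hU : ∑ x ∈ Finset.univ.filter (fun x : α => a ≤ x), (-1 : ℚ) ^ ρ (↑x : WithTop α)
              = (-1 : ℚ) ^ r := by
            rw [← hsum a, upSum, finsum_cond_eq_sum]
            exact Finset.sum_congr (by ext x; simp) (fun x _ => rfl)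
          rw [hU, hρtop, zpow_add_one₀ negQ]
          ring
      | coe a' =>
        induction z using WithTop.recTopCoe with
        | top => exact absurd hlt not_top_lt
        | coe a =>
          have h0 := hX.2.2 a a' (WithTop.coe_lt_coe.1 hlt)
          rw [intervalEulerSum, finsum_cond_eq_sum, sum_filter_withTop]
          rw [if_neg (by
            rintro ⟨-, h⟩
            exact WithTop.not_top_le_coe a' h)]
          rw [zero_add]
          have hfe : Finset.univ.filter
                (fun x : α => (↑a : WithTop α) ≤ ↑x ∧ (↑x : WithTop α) ≤ ↑a')
              = Finset.univ.filter (fun x : α => a ≤ x ∧ x ≤ a') := by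
            ext x; simp
          rw [hfe]
          rw [intervalEulerSum, finsum_cond_eq_sum] at h0
          convert h0 using 2
          rfl

/-- For a strong formal subdivision `σ : X → Y` between finite lower
Eulerian posets, the poset `X̄ = WithTop X` obtained by adjoining a maximal element is
Eulerian (i.e. admits a rank function making it Eulerian) if and only if `Ȳ = WithTop Y`
is Eulerian. -/
theorem withTop_eulerian_iff {X Y : Type*} [PartialOrder X] [PartialOrder Y]
    [Finite X] [Finite Y]
    (ρX : X → ℤ) (ρY : Y → ℤ)
    (hX : LowerEulerian ρX) (hY : LowerEulerian ρY)
    (σ : X → Y) (hσ : StrongFormalSubdivision ρX ρY σ) :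
    (∃ ρ : WithTop X → ℤ, Eulerian ρ) ↔ (∃ ρ : WithTop Y → ℤ, Eulerian ρ) := by
  letI : Fintype X := Fintype.ofFinite X
  letI : Fintype Y := Fintype.ofFinite Y
  rw [withTop_eulerian_char hX, withTop_eulerian_char hY]
  constructor
  · rintro ⟨r, hmax, hsum⟩
    refine ⟨r, ?_, ?_⟩
    · intro y hy
      obtain ⟨x0, hx0⟩ := hσ.2.2.1.1 y
      obtain ⟨x, hx0x, hxmax⟩ := Finite.exists_le_maximal (a := x0) (p := fun _ => True) trivial
      have hxm : IsMax x := fun c hc => hxmax.2 trivial hc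
      have hyx : y ≤ σ x := hx0 ▸ hσ.1 hx0x
      have hσx : σ x = y := le_antisymm (hy hyx) hyx
      obtain ⟨x', hxx', hrr, hσx'⟩ := hσ.2.2.1.2 x (σ x) le_rfl
      have hx'x : x' = x := le_antisymm (hxm hxx') hxx'
      rw [← hσx, ← hrr, hx'x]
      exact hmax x hxm
    · intro y
      obtain ⟨x0, hx0⟩ := hσ.2.2.1.1 y
      rw [← hx0, ← upSum_transport hσ x0]
      exact hsum x0
  · rintro ⟨r, hmax, hsum⟩
    refine ⟨r, ?_, fun z => by rw [upSum_transport hσ z]; exact hsum (σ z)⟩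
    intro x hx
    have hsm : IsMax (σ x) := by
      intro y hy
      obtain ⟨x', hxx', -, hσx'⟩ := hσ.2.2.1.2 x y hy
      have hx'x : x' = x := le_antisymm (hx hxx') hxx'
      rw [← hσx', hx'x]
    obtain ⟨x', hxx', hrr, hσx'⟩ := hσ.2.2.1.2 x (σ x) le_rfl
    have hx'x : x' = x := le_antisymm (hx hxx') hxx'
    rw [← hx'x, hrr]
    exact hmax _ hsm

end SFSPaper
end

section
/- Let σ : X → Y be a strong formal subdivision between finite lower Eulerian posets X and Y with rank functions ρ_X and ρ_Y. Then X is near-Eulerian if and only if Y is near-Eulerian. Moreover, when these conditions hold, σ⁻¹(∂Y) = ∂X. -/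
set_option linter.unusedSectionVars false


namespace SFSPaper

variable {α β : Type*}

/-- A finite poset is near-Eulerian if it is obtained from a finite Eulerian poset `E` of
positive rank by removing the maximal element `1̂_E` and a maximal element `ẑ` of
`E ∖ {1̂_E}`. -/
def NearEulerian (α : Type*) [PartialOrder α] : Prop :=
  ∃ (E : Type) (_ : PartialOrder E) (_ : Finite E) (ρE : E → ℤ) (t zhat : E),
    Eulerian ρE ∧ (∀ z : E, z ≤ t) ∧ 0 < posetRank E ∧ zhat ≠ t ∧
    (∀ w : E, zhat ≤ w → w = zhat ∨ w = t) ∧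
    Nonempty (α ≃o {w : E // w ≠ t ∧ w ≠ zhat})

/-- The boundary `∂B` of a finite poset: the lower order ideal generated by the elements
with exactly one element strictly above them. -/
def posetBoundary (α : Type*) [Preorder α] : Set α :=
  {w : α | ∃ z : α, w ≤ z ∧ ∃! u : α, z < u}


open Classical in
/-- `(-1)^n` as a rational. -/
noncomputable def m1 (n : ℤ) : ℚ := (-1 : ℚ) ^ n

lemma m1_def (n : ℤ) : m1 n = (-1 : ℚ) ^ n := rfl

lemma m1_ne_zero (n : ℤ) : m1 n ≠ 0 := zpow_ne_zero n (by norm_num)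

lemma m1_add (a b : ℤ) : m1 (a + b) = m1 a * m1 b := zpow_add₀ (by norm_num) a b

lemma m1_mul_self (n : ℤ) : m1 n * m1 n = 1 := by
  rw [m1_def, ← mul_zpow]; norm_num

lemma m1_cases (n : ℤ) : m1 n = 1 ∨ m1 n = -1 :=
  mul_self_eq_one_iff.1 (m1_mul_self n)

lemma m1_neg (n : ℤ) : m1 (-n) = m1 n := by
  have h := m1_add n (-n)
  simp only [add_neg_cancel] at h
  have h0 : m1 0 = 1 := by simp [m1_def]
  rcases m1_cases n with h1 | h1 <;> rcases m1_cases (-n) with h2 | h2 <;>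
    rw [h1, h2] <;> rw [h0, h1, h2] at h <;> norm_num at h

lemma m1_sub (a b : ℤ) : m1 (a - b) = m1 a * m1 b := by
  rw [sub_eq_add_neg, m1_add, m1_neg]

lemma m1_succ (n : ℤ) : m1 (n + 1) = - m1 n := by
  rw [m1_add]; simp [m1_def]

lemma m1_mul_cancel (a b : ℤ) : m1 a * m1 (a - b) = m1 b := by
  rw [m1_sub, ← mul_assoc, m1_mul_self, one_mul]

lemma m1_two_mul_add (a b : ℤ) : m1 (2 * a + b) = m1 b := by
  rw [m1_add, show 2 * a = a + a by ring, m1_add, m1_mul_self, one_mul]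

section Sums

variable {α : Type*} {β : Type*} [Fintype α] [Fintype β]

open Classical in
/-- Sum of `g` over all `w` satisfying `P`. -/
noncomputable def csum (P : α → Prop) (g : α → ℚ) : ℚ :=
  ∑ w ∈ Finset.univ.filter P, g w

open Classical in
lemma finsum_eq_csum (P : α → Prop) (g : α → ℚ) :
    (∑ᶠ (w : α) (_ : P w), g w) = csum P g :=
  finsum_cond_eq_sum_of_cond_iff g (fun {x} _ => by simp)

open Classical in
lemma csum_eq_sum_ite (P : α → Prop) (g : α → ℚ) :
    csum P g = ∑ w : α, if P w then g w else 0 := by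
  rw [csum, Finset.sum_filter]

lemma csum_congr {P Q : α → Prop} (h : ∀ w, P w ↔ Q w) (g : α → ℚ) :
    csum P g = csum Q g := by
  classical
  rw [csum_eq_sum_ite, csum_eq_sum_ite]
  exact Finset.sum_congr rfl (fun w _ => by by_cases hw : P w <;> simp [hw, (h w).symm, h w])

lemma csum_congr_fn {P : α → Prop} {g g' : α → ℚ} (h : ∀ w, P w → g w = g' w) :
    csum P g = csum P g' := by
  classical
  rw [csum_eq_sum_ite, csum_eq_sum_ite]
  refine Finset.sum_congr rfl (fun w _ => ?_)
  by_cases hw : P w <;> simp [hw, h]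

lemma csum_empty {P : α → Prop} (h : ∀ w, ¬ P w) (g : α → ℚ) : csum P g = 0 := by
  classical
  rw [csum_eq_sum_ite]
  exact Finset.sum_eq_zero (fun w _ => by simp [h w])

lemma csum_singleton {P : α → Prop} {a : α} (h : ∀ w, P w ↔ w = a) (g : α → ℚ) :
    csum P g = g a := by
  classical
  rw [csum]
  rw [show Finset.univ.filter P = {a} by ext w; simp [h w]]
  simp

lemma csum_pair {P : α → Prop} {a b : α} (hab : a ≠ b) (h : ∀ w, P w ↔ w = a ∨ w = b)
    (g : α → ℚ) : csum P g = g a + g b := by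
  classical
  rw [csum]
  rw [show Finset.univ.filter P = {a, b} by ext w; simp [h w]]
  rw [Finset.sum_pair hab]

lemma csum_split (P Q : α → Prop) (g : α → ℚ) :
    csum P g = csum (fun w => P w ∧ Q w) g + csum (fun w => P w ∧ ¬ Q w) g := by
  classical
  simp only [csum_eq_sum_ite, ← Finset.sum_add_distrib]
  refine Finset.sum_congr rfl (fun w _ => ?_)
  by_cases hP : P w <;> by_cases hQ : Q w <;> simp [hP, hQ]

lemma csum_mul_left (P : α → Prop) (g : α → ℚ) (c : ℚ) :
    csum P (fun w => c * g w) = c * csum P g := by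
  classical
  simp only [csum_eq_sum_ite, Finset.mul_sum]
  exact Finset.sum_congr rfl (fun w _ => by by_cases hP : P w <;> simp [hP])

lemma csum_equiv (e : α ≃ β) (P : β → Prop) (g : β → ℚ) :
    csum P g = csum (fun a => P (e a)) (fun a => g (e a)) := by
  classical
  simp only [csum_eq_sum_ite]
  exact (Fintype.sum_equiv e _ _ (fun a => rfl)).symm

lemma csum_sum_type (P : α ⊕ β → Prop) (g : α ⊕ β → ℚ) :
    csum P g = csum (fun a => P (Sum.inl a)) (fun a => g (Sum.inl a))
      + csum (fun b => P (Sum.inr b)) (fun b => g (Sum.inr b)) := by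
  classical
  simp only [csum_eq_sum_ite]
  exact Fintype.sum_sum_type _

/-- Fiberwise decomposition of a conditional sum along `σ`. -/
lemma csum_fiberwise {σ : α → β} {P : α → Prop} {Q : β → Prop}
    (hmap : ∀ a, P a → Q (σ a)) (g : α → ℚ) :
    csum P g = csum Q (fun y => csum (fun a => P a ∧ σ a = y) g) := by
  classical
  unfold csum
  have hmap' : ∀ a ∈ Finset.univ.filter P, σ a ∈ Finset.univ.filter Q := by
    intro a ha
    simp only [Finset.mem_filter, Finset.mem_univ, true_and] at ha ⊢
    exact hmap a ha
  rw [← Finset.sum_fiberwise_of_maps_to hmap' g]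
  refine Finset.sum_congr rfl (fun y _ => ?_)
  rw [Finset.filter_filter]
  refine Finset.sum_congr ?_ (fun _ _ => rfl)
  ext a; simp [and_comm]

open Classical in
lemma csum_bool (P : Bool → Prop) (g : Bool → ℚ) :
    csum P g = (if P false then g false else 0) + (if P true then g true else 0) := by
  rw [csum_eq_sum_ite, Fintype.sum_bool, add_comm]

open Classical in
lemma csum_const_unique (P : α → Prop) (c : ℚ) :
    ∃ k : ℕ, csum P (fun _ => c) = k * c ∧ (k = 1 → ∃! u, P u) := by
  refine ⟨(Finset.univ.filter P).card, ?_, ?_⟩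
  · rw [csum, Finset.sum_const, nsmul_eq_mul]
  · intro hk
    obtain ⟨a, ha⟩ := Finset.card_eq_one.1 hk
    refine ⟨a, ?_, ?_⟩
    · have h1 : a ∈ Finset.univ.filter P := ha ▸ Finset.mem_singleton_self a
      exact (Finset.mem_filter.1 h1).2
    · intro v hv
      have h1 : v ∈ Finset.univ.filter P := Finset.mem_filter.2 ⟨Finset.mem_univ v, hv⟩
      rw [ha, Finset.mem_singleton] at h1; exact h1

end Sums

section Posets

variable {α : Type*} [PartialOrder α] [Finite α]

/-- In a finite poset, any element of a set has a maximal element of the set above it. -/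
lemma exists_maximal_above {S : Set α} {z : α} (hz : z ∈ S) :
    ∃ w ∈ S, z ≤ w ∧ ∀ u ∈ S, w ≤ u → u = w := by
  have hfin : (S ∩ {w | z ≤ w}).Finite := Set.toFinite _
  obtain ⟨a, ha, hmax⟩ := Set.Finite.exists_maximalFor id _ hfin ⟨z, hz, le_refl z⟩
  exact ⟨a, ha.1, ha.2, fun u hu hau => le_antisymm (hmax ⟨hu, ha.2.trans hau⟩ hau) hau⟩

lemma exists_le_covby {x y : α} (h : x < y) : ∃ z, x ≤ z ∧ z ⋖ y := by
  obtain ⟨a, ha, hmax⟩ := Set.Finite.exists_maximalFor id {w | x ≤ w ∧ w < y}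
    (Set.toFinite _) ⟨x, le_refl x, h⟩
  refine ⟨a, ha.1, ha.2, fun c hac hcy => ?_⟩
  have h2 : c ≤ a := hmax ⟨ha.1.trans hac.le, hcy⟩ hac.le
  exact absurd (le_antisymm hac.le h2) hac.ne

lemma IsRankFunction.lt_of_lt {ρ : α → ℤ} (hρ : IsRankFunction ρ) :
    ∀ ⦃y x : α⦄, x < y → ρ x < ρ y := by
  intro y
  induction y using WellFoundedLT.induction with
  | ind y ih =>
    intro x hxy
    obtain ⟨z, hxz, hzy⟩ := exists_le_covby hxy
    rcases eq_or_lt_of_le hxz with rfl | hlt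
    · rw [hρ hzy]; omega
    · have h1 := ih z hzy.lt hlt
      rw [hρ hzy]; omega

/-- Two rank functions on a finite poset with a least element differ by a constant. -/
lemma rank_diff_const {ρ ρ' : α → ℤ} (hρ : IsRankFunction ρ) (hρ' : IsRankFunction ρ')
    {b : α} (hb : ∀ z, b ≤ z) : ∀ z, ρ' z = ρ z + (ρ' b - ρ b) := by
  intro z
  induction z using WellFoundedLT.induction with
  | ind z ih =>
    rcases eq_or_lt_of_le (hb z) with rfl | hlt
    · omega
    · obtain ⟨w, hbw, hwz⟩ := exists_le_covby hlt
      have := ih w hwz.lt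
      rw [hρ hwz, hρ' hwz]; omega

end Posets

section QD

variable {B : Type*} [PartialOrder B] [Fintype B]

/-- Upper Euler sum `∑_{w ≥ z} (-1)^(ρ w)`. -/
noncomputable def Fup (ρ : B → ℤ) (z : B) : ℚ :=
  csum (fun w => z ≤ w) (fun w => m1 (ρ w))

/-- Upper Euler sum restricted to a set `S`. -/
noncomputable def Sup' (ρ : B → ℤ) (S : Set B) (z : B) : ℚ :=
  csum (fun w => z ≤ w ∧ w ∈ S) (fun w => m1 (ρ w))

/-- The intrinsic data characterizing near-Eulerian posets: `S` is the set of "boundary"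
elements and `r` is the rank of the missing facet. -/
structure QDat (ρ : B → ℤ) (r : ℤ) (S : Set B) : Prop where
  lower : IsLowerSet S
  least_mem : ∀ b : B, (∀ z, b ≤ z) → b ∈ S
  bsum : ∀ z ∈ S, Sup' ρ S z = m1 (r + 1)
  fs_mem : ∀ z ∈ S, Fup ρ z = 0
  fs_not : ∀ z ∉ S, Fup ρ z = m1 r
  rk_maxS : ∀ z ∈ S, (∀ w ∈ S, z ≤ w → w = z) → ρ z = r - 1
  rk_maxB : ∀ z ∉ S, (∀ w, z ≤ w → w = z) → ρ z = r
  rk_le : ∀ z, ρ z ≤ r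
  rk_leS : ∀ z ∈ S, ρ z ≤ r - 1

end QD

section Transfer

variable {X Y : Type*} [PartialOrder X] [PartialOrder Y] [Fintype X] [Fintype Y]
  {ρX : X → ℤ} {ρY : Y → ℤ} {σ : X → Y}

lemma fiber_sum_s12 (hσ : StrongFormalSubdivision ρX ρY σ) {x : X} {y : Y} (h : σ x ≤ y) :
    csum (fun x' => x ≤ x' ∧ σ x' = y) (fun x' => m1 (ρX x')) = m1 (ρY y) := by
  have h1 := hσ.2.2.2 x y h
  rw [show (∑ᶠ (x' : X) (_ : x ≤ x' ∧ σ x' = y), (-1 : ℚ) ^ (ρY y - ρX x'))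
      = csum (fun x' => x ≤ x' ∧ σ x' = y) (fun x' => m1 (ρY y - ρX x')) from
    finsum_eq_csum _ _] at h1
  have h2 : csum (fun x' => x ≤ x' ∧ σ x' = y) (fun x' => m1 (ρX x'))
      = csum (fun x' => x ≤ x' ∧ σ x' = y) (fun x' => m1 (ρY y) * m1 (ρY y - ρX x')) :=
    csum_congr_fn (fun w _ => (m1_mul_cancel (ρY y) (ρX w)).symm)
  rw [h2, csum_mul_left, h1, mul_one]

/-- Fiberwise transfer of restricted Euler sums along a strong formal subdivision. -/
lemma csum_transfer (hσ : StrongFormalSubdivision ρX ρY σ) (T' : Set Y) (x : X) :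
    csum (fun x' => x ≤ x' ∧ σ x' ∈ T') (fun x' => m1 (ρX x'))
      = csum (fun y => σ x ≤ y ∧ y ∈ T') (fun y => m1 (ρY y)) := by
  rw [csum_fiberwise (σ := σ) (Q := fun y => σ x ≤ y ∧ y ∈ T')
    (fun a ha => ⟨hσ.1 ha.1, ha.2⟩) (fun x' => m1 (ρX x'))]
  refine csum_congr_fn (fun y hy => ?_)
  rw [csum_congr (Q := fun x' => x ≤ x' ∧ σ x' = y)
    (fun a => ⟨fun h => ⟨h.1.1, h.2⟩, fun h => ⟨⟨h.1, h.2 ▸ hy.2⟩, h.2⟩⟩)]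
  exact fiber_sum_s12 hσ hy.1

lemma Fup_transfer (hσ : StrongFormalSubdivision ρX ρY σ) (x : X) :
    Fup ρX x = Fup ρY (σ x) := by
  have h := csum_transfer hσ Set.univ x
  simp only [Set.mem_univ, and_true] at h
  exact h

lemma sigma_least (hσ : StrongFormalSubdivision ρX ρY σ) {bX : X} (hbX : ∀ z, bX ≤ z)
    (y : Y) : σ bX ≤ y := by
  obtain ⟨x, rfl⟩ := hσ.2.2.1.1 y
  exact hσ.1 (hbX x)

/-- Pullback of the near-Eulerian data along a strong formal subdivision. -/
lemma QDat.pullback (hσ : StrongFormalSubdivision ρX ρY σ) {r : ℤ} {S' : Set Y}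
    (hQ : QDat ρY r S') : QDat ρX r (σ ⁻¹' S') := by
  have hss := hσ.2.2.1.2
  constructor
  · intro a b hba ha
    exact hQ.lower (hσ.1 hba) ha
  · intro b hb
    exact hQ.least_mem (σ b) (sigma_least hσ hb)
  · intro z hz
    exact (csum_transfer hσ S' z).trans (hQ.bsum (σ z) hz)
  · intro z hz
    rw [Fup_transfer hσ z]
    exact hQ.fs_mem (σ z) hz
  · intro z hz
    rw [Fup_transfer hσ z]
    exact hQ.fs_not (σ z) hz
  · -- maximal in S pulls back
    intro z hz hmax
    have hymax : ∀ w ∈ S', σ z ≤ w → w = σ z := by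
      intro y' hy' hle
      obtain ⟨x', hx1, _, hx3⟩ := hss z y' hle
      have : x' = z := hmax x' (by rw [Set.mem_preimage, hx3]; exact hy') hx1
      rw [← hx3, this]
    have h1 : ρY (σ z) = r - 1 := hQ.rk_maxS (σ z) hz hymax
    obtain ⟨x', hx1, hx2, hx3⟩ := hss z (σ z) le_rfl
    have : x' = z := hmax x' (by rw [Set.mem_preimage, hx3]; exact hz) hx1
    rw [← this, hx2, h1]
  · intro z hz hmax
    have hymax : ∀ w, σ z ≤ w → w = σ z := by
      intro y' hle
      obtain ⟨x', hx1, _, hx3⟩ := hss z y' hle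
      rw [← hx3, hmax x' hx1]
    have h1 : ρY (σ z) = r := hQ.rk_maxB (σ z) hz hymax
    obtain ⟨x', hx1, hx2, hx3⟩ := hss z (σ z) le_rfl
    rw [← hmax x' hx1, hx2, h1]
  · intro z
    exact le_trans (hσ.2.1 z) (hQ.rk_le (σ z))
  · intro z hz
    exact le_trans (hσ.2.1 z) (hQ.rk_leS (σ z) hz)

/-- Pushforward of the near-Eulerian data along a strong formal subdivision. -/
lemma QDat.pushforward (hσ : StrongFormalSubdivision ρX ρY σ) (hρX : IsRankFunction ρX)
    {bX : X} (hbX : ∀ z, bX ≤ z) {r : ℤ} {S : Set X} (hQ : QDat ρX r S) :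
    QDat ρY r {y | Fup ρY y = 0} ∧ σ ⁻¹' {y | Fup ρY y = 0} = S := by
  have hss := hσ.2.2.1.2
  have hsurj := hσ.2.2.1.1
  set S' : Set Y := {y | Fup ρY y = 0} with hS'
  have hpre : σ ⁻¹' S' = S := by
    ext x
    simp only [Set.mem_preimage, hS', Set.mem_setOf_eq, ← Fup_transfer hσ x]
    constructor
    · intro h
      by_contra hx
      rw [hQ.fs_not x hx] at h
      exact m1_ne_zero r h
    · exact hQ.fs_mem x
  have hmem : ∀ x : X, σ x ∈ S' ↔ x ∈ S := fun x => by
    rw [← hpre]; exact Iff.rfl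
  refine ⟨?_, hpre⟩
  constructor
  · -- lower set
    intro y y' hy'y hy
    obtain ⟨x', rfl⟩ := hsurj y'
    obtain ⟨x'', hx1, _, hx3⟩ := hss x' y hy'y
    have hx''S : x'' ∈ S := (hmem x'').1 (hx3 ▸ hy)
    exact (hmem x').2 (hQ.lower hx1 hx''S)
  · -- least element
    intro b hb
    have h1 : b = σ bX := le_antisymm (hb (σ bX)) (sigma_least hσ hbX b)
    rw [h1]
    exact (hmem bX).2 (hQ.least_mem bX hbX)
  · -- boundary sums
    intro y hy
    obtain ⟨x, rfl⟩ := hsurj y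
    have hxS : x ∈ S := (hmem x).1 hy
    have h := csum_transfer hσ S' x
    unfold Sup'
    rw [← h, csum_congr (Q := fun w => x ≤ w ∧ w ∈ S)
      (fun w => and_congr_right (fun _ => hmem w))]
    exact hQ.bsum x hxS
  · intro y hy
    exact hy
  · intro y hy
    obtain ⟨x, rfl⟩ := hsurj y
    rw [← Fup_transfer hσ x]
    exact hQ.fs_not x (fun hx => hy ((hmem x).2 hx))
  · -- maximal in S'
    intro y hy hymax
    obtain ⟨x', _, hx2, hx3⟩ := hss bX y (sigma_least hσ hbX y)
    have hx'S : x' ∈ S := (hmem x').1 (hx3 ▸ hy)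
    have hxmax : ∀ w ∈ S, x' ≤ w → w = x' := by
      intro w hw hlew
      by_contra hne
      have hlt : x' < w := lt_of_le_of_ne hlew (fun h => hne h.symm)
      have h1 : σ w = y := hymax (σ w) ((hmem w).2 hw) (hx3 ▸ hσ.1 hlew)
      have h2 : ρX w ≤ ρY y := h1 ▸ hσ.2.1 w
      have h3 : ρX x' < ρX w := hρX.lt_of_lt hlt
      omega
    have := hQ.rk_maxS x' hx'S hxmax
    omega
  · -- maximal in Y, not in S'
    intro y hy hymax
    obtain ⟨x', _, hx2, hx3⟩ := hss bX y (sigma_least hσ hbX y)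
    have hx'S : x' ∉ S := fun h => hy (hx3 ▸ (hmem x').2 h)
    have hxmax : ∀ w, x' ≤ w → w = x' := by
      intro w hlew
      by_contra hne
      have hlt : x' < w := lt_of_le_of_ne hlew (fun h => hne h.symm)
      have h1 : σ w = y := hymax (σ w) (hx3 ▸ hσ.1 hlew)
      have h2 : ρX w ≤ ρY y := h1 ▸ hσ.2.1 w
      have h3 : ρX x' < ρX w := hρX.lt_of_lt hlt
      omega
    have := hQ.rk_maxB x' hx'S hxmax
    omega
  · intro y
    obtain ⟨x', _, hx2, hx3⟩ := hss bX y (sigma_least hσ hbX y)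
    rw [← hx2]
    exact hQ.rk_le x'
  · intro y hy
    obtain ⟨x', _, hx2, hx3⟩ := hss bX y (sigma_least hσ hbX y)
    rw [← hx2]
    exact hQ.rk_leS x' ((hmem x').1 (hx3 ▸ hy))

end Transfer

section Boundary

variable {B : Type*} [PartialOrder B] [Fintype B]

/-- The boundary of a poset carrying near-Eulerian data is exactly `S`. -/
lemma QDat.boundary_eq {ρ : B → ℤ} {r : ℤ} {S : Set B}
    (hρ : IsRankFunction ρ) (hQ : QDat ρ r S) : posetBoundary B = S := by
  apply Set.Subset.antisymm
  · rintro w ⟨z, hwz, u, hzu, huniq⟩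
    have hzS : z ∈ S := by
      by_contra hz
      have hF := hQ.fs_not z hz
      have hset : ∀ v, z ≤ v ↔ (v = z ∨ v = u) := by
        intro v
        constructor
        · intro hv
          rcases eq_or_lt_of_le hv with h | h
          · exact Or.inl h.symm
          · exact Or.inr (huniq v h)
        · rintro (rfl | rfl)
          exacts [le_rfl, hzu.le]
      have hz_ne : z ≠ u := ne_of_lt hzu
      rw [Fup, csum_pair hz_ne hset] at hF
      rcases m1_cases (ρ z) with h1 | h1 <;> rcases m1_cases (ρ u) with h2 | h2 <;>
        rcases m1_cases r with h3 | h3 <;> rw [h1, h2, h3] at hF <;> norm_num at hF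
    exact hQ.lower hwz hzS
  · intro z hzS
    obtain ⟨w, hwS, hzw, hwmax⟩ := exists_maximal_above hzS
    have hρw : ρ w = r - 1 := hQ.rk_maxS w hwS hwmax
    have hsplit := csum_split (fun u => w ≤ u) (fun u => u = w) (fun u => m1 (ρ u))
    have h1 : csum (fun u => w ≤ u ∧ u = w) (fun u => m1 (ρ u)) = m1 (ρ w) :=
      csum_singleton (fun u => ⟨fun h => h.2, fun h => ⟨h.ge, h⟩⟩) _
    have h2 : csum (fun u => w ≤ u ∧ ¬ u = w) (fun u => m1 (ρ u))
        = csum (fun u => w < u) (fun u => m1 (ρ u)) :=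
      csum_congr (fun u => ⟨fun h => lt_of_le_of_ne h.1 (Ne.symm h.2),
        fun h => ⟨h.le, fun e => absurd e h.ne'⟩⟩) _
    have hrk : ∀ u, w < u → ρ u = r := by
      intro u hu
      have hunS : u ∉ S := fun huS => absurd (hwmax u huS hu.le) hu.ne'
      have hle := hQ.rk_le u
      have hlt := hρ.lt_of_lt hu
      have hwS' := hQ.rk_leS w hwS
      omega
    have h3 : csum (fun u => w < u) (fun u => m1 (ρ u))
        = csum (fun u => w < u) (fun _ => m1 r) :=
      csum_congr_fn (fun u hu => by rw [hrk u hu])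
    obtain ⟨k, hk1, hk2⟩ := csum_const_unique (fun u => w < u) (m1 r)
    have hFw : Fup ρ w = 0 := hQ.fs_mem w hwS
    rw [Fup, hsplit, h1, h2, h3, hk1, hρw] at hFw
    have hmr : m1 r = - m1 (r - 1) := by
      rw [show r = (r - 1) + 1 by ring, m1_succ]; ring_nf
    rw [hmr] at hFw
    have hk : (k : ℚ) = 1 := by
      have hne := m1_ne_zero (r - 1)
      have : m1 (r - 1) * (1 - k) = 0 := by linarith [hFw]
      rcases mul_eq_zero.1 this with h | h
      · exact absurd h hne
      · linarith
    have : k = 1 := by exact_mod_cast hk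
    exact ⟨w, hzw, hk2 this⟩

end Boundary

section Extract

/-- Changing the rank function by a constant shifts the near-Eulerian data. -/
lemma QDat.shift {B : Type*} [PartialOrder B] [Fintype B] {ρ ρ' : B → ℤ} {r : ℤ} {S : Set B}
    (hQ : QDat ρ' r S) (c : ℤ) (h : ∀ z, ρ' z = ρ z + c) : QDat ρ (r - c) S := by
  have hm : ∀ z, m1 (ρ' z) = m1 c * m1 (ρ z) := fun z => by rw [h z, m1_add, mul_comm]
  have hc := m1_ne_zero c
  constructor
  · exact hQ.lower
  · exact hQ.least_mem
  · intro z hz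
    have h1 := hQ.bsum z hz
    rw [Sup', csum_congr_fn (fun w _ => hm w), csum_mul_left] at h1
    have h2 : m1 c * Sup' ρ S z = m1 c * m1 (r - c + 1) := by
      rw [← m1_add, show c + (r - c + 1) = r + 1 by ring]
      exact h1
    exact mul_left_cancel₀ hc h2
  · intro z hz
    have h1 := hQ.fs_mem z hz
    rw [Fup, csum_congr_fn (fun w _ => hm w), csum_mul_left] at h1
    rcases mul_eq_zero.1 h1 with h | h
    · exact absurd h hc
    · exact h
  · intro z hz
    have h1 := hQ.fs_not z hz
    rw [Fup, csum_congr_fn (fun w _ => hm w), csum_mul_left] at h1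
    have h2 : m1 c * Fup ρ z = m1 c * m1 (r - c) := by
      rw [← m1_add, show c + (r - c) = r by ring]
      exact h1
    exact mul_left_cancel₀ hc h2
  · intro z hz hmax
    have := hQ.rk_maxS z hz hmax
    have := h z
    omega
  · intro z hz hmax
    have := hQ.rk_maxB z hz hmax
    have := h z
    omega
  · intro z
    have := hQ.rk_le z
    have := h z
    omega
  · intro z hz
    have := hQ.rk_leS z hz
    have := h z
    omega

/-- Extraction: a finite lower Eulerian near-Eulerian poset carries near-Eulerian data. -/
lemma NearEulerian.exists_qdat {B : Type*} [PartialOrder B] [Fintype B] {ρ : B → ℤ}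
    (hB : LowerEulerian ρ) (hNE : NearEulerian B) : ∃ r S, QDat ρ r S := by
  classical
  obtain ⟨E, _, _, ρE, t, zhat, hEul, htop, _, hne, hzup, ⟨e⟩⟩ := hNE
  haveI : Fintype E := Fintype.ofFinite E
  set ι : B → E := fun b => (e b).1 with hι
  have hιt : ∀ b, ι b ≠ t := fun b => (e b).2.1
  have hιz : ∀ b, ι b ≠ zhat := fun b => (e b).2.2
  have hιle : ∀ {a b : B}, ι a ≤ ι b ↔ a ≤ b := fun {a b} =>
    Iff.trans (Subtype.coe_le_coe (x := e a) (y := e b)) e.le_iff_le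
  have hιinj : Function.Injective ι := fun a b h =>
    e.injective (Subtype.ext h)
  have hEρ : IsRankFunction ρE := hEul.1.1
  have hstrict := hEρ.lt_of_lt
  have hzt : zhat < t := lt_of_le_of_ne (htop zhat) hne
  have htz : ¬ t ≤ zhat := fun h => hne (le_antisymm (htop zhat) h)
  -- the least element of `E` lies in the `B`-part
  obtain ⟨b0E, hb0E⟩ := hEul.1.2.1
  obtain ⟨b0, hb0⟩ := hB.2.1
  have hb0Et : b0E ≠ t := fun h => htz (h ▸ hb0E zhat)
  have hb0Ez : b0E ≠ zhat := by
    intro h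
    rcases hzup (ι b0) (h ▸ hb0E (ι b0)) with h1 | h1
    · exact hιz b0 h1
    · exact hιt b0 h1
  -- the global equivalence
  set φ : B ⊕ Bool ≃ E :=
    { toFun := fun x => Sum.elim ι (fun c => cond c t zhat) x
      invFun := fun w =>
        if h1 : w = t then Sum.inr true else if h2 : w = zhat then Sum.inr false
        else Sum.inl (e.symm ⟨w, h1, h2⟩)
      left_inv := by
        rintro (b | c)
        · show (if h1 : ι b = t then Sum.inr true else if h2 : ι b = zhat then Sum.inr false
            else Sum.inl (e.symm ⟨ι b, h1, h2⟩)) = Sum.inl b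
          rw [dif_neg (hιt b), dif_neg (hιz b)]
          exact congrArg Sum.inl (e.symm_apply_eq.2 (Subtype.ext rfl))
        · cases c
          · show (if h1 : zhat = t then Sum.inr true else if h2 : zhat = zhat then Sum.inr false
              else Sum.inl (e.symm ⟨zhat, h1, h2⟩)) = Sum.inr false
            rw [dif_neg hne, dif_pos rfl]
          · show (if h1 : t = t then Sum.inr true else if h2 : t = zhat then Sum.inr false
              else Sum.inl (e.symm ⟨t, h1, h2⟩)) = Sum.inr true
            rw [dif_pos rfl]
      right_inv := by
        intro w
        show Sum.elim ι (fun c => cond c t zhat)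
          (if h1' : w = t then Sum.inr true else if h2' : w = zhat then Sum.inr false
            else Sum.inl (e.symm ⟨w, h1', h2'⟩)) = w
        by_cases h1 : w = t
        · rw [dif_pos h1]
          exact h1.symm
        · by_cases h2 : w = zhat
          · rw [dif_neg h1, dif_pos h2]
            exact h2.symm
          · rw [dif_neg h1, dif_neg h2]
            exact congrArg Subtype.val (e.apply_symm_apply ⟨w, h1, h2⟩) } with hφ
  set r := ρE zhat with hr
  set ρ' : B → ℤ := fun b => ρE (ι b) with hρ'def
  set S : Set B := {b | ι b ≤ zhat} with hS
  -- covering relations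
  have hcovzt : zhat ⋖ t := by
    refine ⟨hzt, fun u h1 h2 => ?_⟩
    rcases hzup u h1.le with rfl | rfl
    · exact lt_irrefl _ h1
    · exact lt_irrefl _ h2
  have hρt : ρE t = r + 1 := hEρ hcovzt
  -- decomposition of sums over `E`
  have hconv : ∀ (P : E → Prop) (g : E → ℚ),
      csum P g = csum (fun b => P (ι b)) (fun b => g (ι b))
        + ((if P zhat then g zhat else 0) + (if P t then g t else 0)) := by
    intro P g
    rw [csum_equiv φ P g, csum_sum_type, csum_bool]
    rfl
  have hsum' : ∀ {z z' : E}, z < z' →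
      csum (fun w => z ≤ w ∧ w ≤ z') (fun w => m1 (ρE w)) = 0 := by
    intro z z' h
    have h1 := hEul.1.2.2 z z' h
    rw [intervalEulerSum, finsum_eq_csum] at h1
    exact h1
  have hρ' : IsRankFunction ρ' := by
    intro a b hab
    refine hEρ ⟨lt_of_le_of_ne (hιle.2 hab.le) (fun h => hab.ne (hιinj h)), ?_⟩
    intro u h1 h2
    have hut : u ≠ t := ne_of_lt (lt_of_lt_of_le h2 (htop _))
    have huz : u ≠ zhat := by
      rintro rfl
      rcases hzup (ι b) h2.le with h3 | h3
      · exact hιz b h3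
      · exact hιt b h3
    obtain ⟨c, hc⟩ : ∃ c, ι c = u := ⟨e.symm ⟨u, hut, huz⟩, congrArg Subtype.val (e.apply_symm_apply ⟨u, hut, huz⟩)⟩
    rw [← hc] at h1 h2
    exact hab.2 (lt_of_le_of_ne (hιle.1 h1.le) (fun h => h1.ne (congrArg ι h)))
      (lt_of_le_of_ne (hιle.1 h2.le) (fun h => h2.ne (congrArg ι h)))
  have hQ : QDat ρ' r S := by
    constructor
    · intro a b hba ha
      exact le_trans (hιle.2 hba) ha
    · -- least element of B is in S
      intro b hb
      have h1 : ∃ c, ι c = b0E := ⟨e.symm ⟨b0E, hb0Et, hb0Ez⟩,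
        congrArg Subtype.val (e.apply_symm_apply ⟨b0E, hb0Et, hb0Ez⟩)⟩
      obtain ⟨c, hc⟩ := h1
      have h2 : ι b = b0E := le_antisymm (hc ▸ hιle.2 (hb c)) (hb0E (ι b))
      rw [hS, Set.mem_setOf_eq, h2]
      exact hb0E zhat
    · -- boundary sums
      intro z hz
      have hlt : ι z < zhat := lt_of_le_of_ne hz (hιz z)
      have h0 := hsum' hlt
      rw [hconv] at h0
      rw [if_pos ⟨hlt.le, le_rfl⟩, if_neg (fun h => htz h.2)] at h0
      have h1 : csum (fun b => ι z ≤ ι b ∧ ι b ≤ zhat) (fun b => m1 (ρE (ι b)))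
          = Sup' ρ' S z :=
        csum_congr (fun b => and_congr_left (fun _ => hιle)) _
      rw [h1] at h0
      have h2 : Sup' ρ' S z = - m1 r := by linarith only [h0]
      rw [h2, m1_succ]
    · -- Fup for boundary elements
      intro z hz
      have hlt : ι z < t := lt_of_le_of_ne (htop _) (hιt z)
      have h0 := hsum' hlt
      rw [hconv] at h0
      rw [if_pos ⟨hz, hzt.le⟩, if_pos ⟨htop _, le_rfl⟩] at h0
      have h1 : csum (fun b => ι z ≤ ι b ∧ ι b ≤ t) (fun b => m1 (ρE (ι b)))
          = Fup ρ' z :=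
        csum_congr (fun b => ⟨fun h => hιle.1 h.1, fun h => ⟨hιle.2 h, htop _⟩⟩) _
      rw [h1, hρt, m1_succ] at h0
      linarith only [h0]
    · -- Fup for interior elements
      intro z hz
      have hlt : ι z < t := lt_of_le_of_ne (htop _) (hιt z)
      have h0 := hsum' hlt
      rw [hconv] at h0
      rw [if_neg (fun h => hz h.1), if_pos ⟨htop _, le_rfl⟩] at h0
      have h1 : csum (fun b => ι z ≤ ι b ∧ ι b ≤ t) (fun b => m1 (ρE (ι b)))
          = Fup ρ' z :=
        csum_congr (fun b => ⟨fun h => hιle.1 h.1, fun h => ⟨hιle.2 h, htop _⟩⟩) _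
      rw [h1, hρt, m1_succ] at h0
      linarith only [h0]
    · -- maximal elements of S have rank r - 1
      intro z hz hmax
      have hlt : ι z < zhat := lt_of_le_of_ne hz (hιz z)
      have hcov : ι z ⋖ zhat := by
        refine ⟨hlt, fun u h1 h2 => ?_⟩
        have hut : u ≠ t := fun h => htz (h ▸ h2.le)
        have huz : u ≠ zhat := h2.ne
        obtain ⟨c, hc⟩ : ∃ c, ι c = u := ⟨e.symm ⟨u, hut, huz⟩,
          congrArg Subtype.val (e.apply_symm_apply ⟨u, hut, huz⟩)⟩
        rw [← hc] at h1 h2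
        have hcS : c ∈ S := h2.le
        have := hmax c hcS (hιle.1 h1.le)
        exact h1.ne' (congrArg ι this)
      have h5 := hEρ hcov
      show ρE (ι z) = r - 1
      omega
    · -- maximal elements of B outside S have rank r
      intro z hz hmax
      have hlt : ι z < t := lt_of_le_of_ne (htop _) (hιt z)
      have hcov : ι z ⋖ t := by
        refine ⟨hlt, fun u h1 h2 => ?_⟩
        have hut : u ≠ t := h2.ne
        have huz : u ≠ zhat := by
          rintro rfl
          exact hz h1.le
        obtain ⟨c, hc⟩ : ∃ c, ι c = u := ⟨e.symm ⟨u, hut, huz⟩,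
          congrArg Subtype.val (e.apply_symm_apply ⟨u, hut, huz⟩)⟩
        rw [← hc] at h1
        have := hmax c (hιle.1 h1.le)
        exact h1.ne' (congrArg ι this)
      have h5 := hEρ hcov
      show ρE (ι z) = r
      omega
    · intro z
      have h5 := hstrict (lt_of_le_of_ne (htop (ι z)) (hιt z))
      show ρE (ι z) ≤ r
      omega
    · intro z hz
      have h5 := hstrict (lt_of_le_of_ne (hz : ι z ≤ zhat) (hιz z))
      show ρE (ι z) ≤ r - 1
      omega
  obtain ⟨bB, hbB⟩ := hB.2.1
  have hshift := rank_diff_const hB.1 hρ' hbB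
  exact ⟨r - (ρ' bB - ρ bB), S, hQ.shift _ hshift⟩

end Extract

section Transfer0

/-- A `Type 0` carrier with no pre-existing order instances. -/
structure FinWrap (n : ℕ) : Type where
  val : Fin n

def finWrapEquiv (n : ℕ) : FinWrap n ≃ Fin n :=
  ⟨FinWrap.val, FinWrap.mk, fun _ => rfl, fun _ => rfl⟩

/-- Transfer of the Eulerian-poset data down to a `Type 0` copy, yielding `NearEulerian`. -/
lemma nearEulerian_of_data {α : Type v} [PartialOrder α] {E : Type u} [PartialOrder E]
    [Finite E] (ρE : E → ℤ) (t zhat : E) (hE : Eulerian ρE) (htop : ∀ z : E, z ≤ t)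
    (hne : zhat ≠ t) (hzup : ∀ w : E, zhat ≤ w → w = zhat ∨ w = t)
    (iso : α ≃o {w : E // w ≠ t ∧ w ≠ zhat}) : NearEulerian α := by
  classical
  haveI : Fintype E := Fintype.ofFinite E
  obtain ⟨n, ⟨q⟩⟩ := Finite.exists_equiv_fin E
  let C : Type := FinWrap n
  have qC : E ≃ C := q.trans (finWrapEquiv n).symm
  letI instC : PartialOrder C := PartialOrder.lift qC.symm qC.symm.injective
  haveI : Finite C := Finite.of_equiv E qC
  haveI : Fintype C := Fintype.ofFinite C
  let g : C ≃o E := { toEquiv := qC.symm, map_rel_iff' := fun {a b} => Iff.rfl }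
  refine ⟨C, instC, inferInstance, fun c => ρE (g c), g.symm t, g.symm zhat, ?_, ?_, ?_, ?_, ?_, ?_⟩
  · -- Eulerian
    refine ⟨⟨?_, ?_, ?_⟩, ⟨g.symm t, fun z => ?_⟩⟩
    · intro a b hab
      exact hE.1.1 ((apply_covBy_apply_iff g).2 hab)
    · obtain ⟨b0, hb0⟩ := hE.1.2.1
      exact ⟨g.symm b0, fun z => g.le_iff_le.mp
        (by rw [g.apply_symm_apply]; exact hb0 (g z))⟩
    · intro z z' hlt
      have h1 := hE.1.2.2 (g z) (g z') (g.strictMono hlt)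
      rw [intervalEulerSum, finsum_eq_csum] at h1 ⊢
      rw [csum_equiv g.toEquiv (fun w => g z ≤ w ∧ w ≤ g z') (fun w => (-1 : ℚ) ^ ρE w)] at h1
      have h2 : csum (fun w : C => z ≤ w ∧ w ≤ z') (fun w => (-1 : ℚ) ^ ρE (g w))
          = csum (fun a : C => g z ≤ g.toEquiv a ∧ g.toEquiv a ≤ g z')
              (fun a => (-1 : ℚ) ^ ρE (g.toEquiv a)) :=
        csum_congr (fun c => (and_congr g.le_iff_le g.le_iff_le).symm) _
      exact h2.trans h1
    · exact g.le_iff_le.mp (by rw [g.apply_symm_apply]; exact htop (g z))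
  · intro z
    exact g.le_iff_le.mp (by rw [g.apply_symm_apply]; exact htop (g z))
  · -- positive rank
    obtain ⟨b0, hb0⟩ := hE.1.2.1
    have hb0t : b0 ≠ t := by
      rintro rfl
      exact hne (le_antisymm (htop zhat) (hb0 zhat))
    have hlt : g.symm b0 < g.symm t := g.symm.strictMono (lt_of_le_of_ne (htop b0) hb0t)
    have h1 : (1 : ℕ) ∈ {m : ℕ | ∃ c : Fin (m + 1) → C, StrictMono c} := by
      refine ⟨fun i => if i = 0 then g.symm b0 else g.symm t, ?_⟩
      intro i j hij
      have h1 : (i : ℕ) < (j : ℕ) := hij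
      have h2 : (j : ℕ) < 1 + 1 := j.isLt
      have hi : i = 0 := Fin.ext (by simp only [Fin.val_zero]; omega)
      have hj : j ≠ 0 := by
        intro h
        rw [h] at h1
        simp only [Fin.val_zero] at h1
        omega
      show (if i = 0 then g.symm b0 else g.symm t) < (if j = 0 then g.symm b0 else g.symm t)
      rw [if_pos hi, if_neg hj]
      exact hlt
    have hbdd : BddAbove {m : ℕ | ∃ c : Fin (m + 1) → C, StrictMono c} := by
      refine ⟨Fintype.card C, fun m hm => ?_⟩
      obtain ⟨c, hc⟩ := hm
      have h3 := Fintype.card_le_of_injective c hc.injective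
      simp only [Fintype.card_fin] at h3
      omega
    exact lt_of_lt_of_le Nat.one_pos (le_csSup hbdd h1)
  · -- zhat ≠ t
    intro h
    exact hne (g.symm.injective h)
  · -- upper set of zhat
    intro w hw
    have h1 : zhat ≤ g w := by
      rw [← g.apply_symm_apply zhat]
      exact g.le_iff_le.mpr hw
    rcases hzup (g w) h1 with h2 | h2
    · exact Or.inl (by rw [← h2, g.symm_apply_apply])
    · exact Or.inr (by rw [← h2, g.symm_apply_apply])
  · -- the order isomorphism
    have hcond : ∀ w : E, (w ≠ t ∧ w ≠ zhat) ↔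
        (g.symm w ≠ g.symm t ∧ g.symm w ≠ g.symm zhat) := by
      intro w
      constructor
      · intro h
        exact ⟨fun h1 => h.1 (g.symm.injective h1), fun h1 => h.2 (g.symm.injective h1)⟩
      · intro h
        exact ⟨fun h1 => h.1 (by rw [h1]), fun h1 => h.2 (by rw [h1])⟩
    let e2 : {w : E // w ≠ t ∧ w ≠ zhat} ≃ {w : C // w ≠ g.symm t ∧ w ≠ g.symm zhat} :=
      g.symm.toEquiv.subtypeEquiv (fun w => hcond w)
    refine ⟨iso.trans { toEquiv := e2, map_rel_iff' := fun {a b} => ?_ }⟩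
    show g.symm a.1 ≤ g.symm b.1 ↔ (a : E) ≤ (b : E)
    exact g.symm.le_iff_le

end Transfer0

section Reconstruct

/-- The poset `B ∪ {ẑ, 1̂}` obtained by adjoining to `B` an element `zh` above the
lower set `L` and a top element `top`. -/
inductive NEC {B : Type u} [Preorder B] (L : LowerSet B) : Type u
  | elt : B → NEC L
  | zh : NEC L
  | top : NEC L

namespace NEC

variable {B : Type u} [PartialOrder B] {L : LowerSet B}

def nle : NEC L → NEC L → Prop
  | elt a, elt b => a ≤ b
  | elt a, zh => a ∈ L
  | _, top => True
  | zh, zh => True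
  | zh, elt _ => False
  | top, elt _ => False
  | top, zh => False

instance : PartialOrder (NEC L) where
  le := nle
  le_refl x := by cases x <;> first | exact le_refl _ | trivial
  le_trans x y z h1 h2 := by
    cases x <;> cases y <;> cases z <;>
      first
        | trivial
        | exact le_trans h1 h2
        | exact L.lower h1 h2
        | exact h1
        | exact (h1 : False).elim
        | exact (h2 : False).elim
  le_antisymm x y h1 h2 := by
    cases x <;> cases y <;>
      first
        | rfl
        | exact congrArg elt (le_antisymm h1 h2)
        | exact (h1 : False).elim
        | exact (h2 : False).elim

lemma le_elt_iff {a b : B} : (elt a : NEC L) ≤ elt b ↔ a ≤ b := Iff.rfl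
lemma elt_le_zh_iff {a : B} : (elt a : NEC L) ≤ zh ↔ a ∈ L := Iff.rfl
lemma le_top' (x : NEC L) : x ≤ top := by cases x <;> trivial
lemma not_zh_le_elt {a : B} : ¬ (zh : NEC L) ≤ elt a := fun h => h
lemma not_top_le_elt {a : B} : ¬ (top : NEC L) ≤ elt a := fun h => h
lemma not_top_le_zh : ¬ (top : NEC L) ≤ zh := fun h => h

def necEquiv : B ⊕ Bool ≃ NEC L where
  toFun x := Sum.elim elt (fun c => cond c top zh) x
  invFun x := match x with
    | elt a => Sum.inl a
    | zh => Sum.inr false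
    | top => Sum.inr true
  left_inv x := by
    rcases x with a | c
    · rfl
    · cases c <;> rfl
  right_inv x := by cases x <;> rfl

instance [Finite B] : Finite (NEC L) := Finite.of_equiv _ (necEquiv : B ⊕ Bool ≃ NEC L)

/-- The rank function on `NEC L`. -/
def nrank (ρ : B → ℤ) (r : ℤ) : NEC L → ℤ
  | elt a => ρ a
  | zh => r
  | top => r + 1

@[simp] lemma nrank_elt (ρ : B → ℤ) (r : ℤ) (a : B) : nrank (L := L) ρ r (elt a) = ρ a := rfl
@[simp] lemma nrank_zh (ρ : B → ℤ) (r : ℤ) : nrank (L := L) ρ r zh = r := rfl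
@[simp] lemma nrank_top (ρ : B → ℤ) (r : ℤ) : nrank (L := L) ρ r top = r + 1 := rfl

end NEC

open NEC in
/-- Reconstruction: near-Eulerian data on a finite lower Eulerian poset makes the
poset near-Eulerian. -/
lemma QDat.nearEulerian {B : Type u} [PartialOrder B] [Fintype B] {ρ : B → ℤ} {r : ℤ}
    {S : Set B} (hB : LowerEulerian ρ) (hQ : QDat ρ r S) : NearEulerian B := by
  classical
  set L : LowerSet B := ⟨S, hQ.lower⟩ with hL
  haveI : Fintype (NEC L) := Fintype.ofFinite _
  set ρE : NEC L → ℤ := nrank ρ r with hρE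
  -- rank function
  have hrk : IsRankFunction ρE := by
    rintro (a | - | -) (b | - | -) hcov
    · -- elt ⋖ elt
      have hab : a < b := lt_of_le_of_ne hcov.1.le
        (fun h => hcov.1.ne (congrArg NEC.elt h))
      have hcv : a ⋖ b := by
        refine ⟨hab, fun c h1 h2 => ?_⟩
        exact hcov.2 (⟨h1.le, fun h => h1.not_ge h⟩ : (NEC.elt a : NEC L) < NEC.elt c)
          ⟨h2.le, fun h => h2.not_ge h⟩
      exact hB.1 hcv
    · -- elt ⋖ zh
      have haS : a ∈ S := hcov.1.le
      have hmax : ∀ w ∈ S, a ≤ w → w = a := by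
        intro w hw hle
        by_contra hne
        have h1 : (NEC.elt a : NEC L) < NEC.elt w :=
          ⟨hle, fun h => hne (le_antisymm (h : w ≤ a) hle)⟩
        have h2 : (NEC.elt w : NEC L) < NEC.zh := ⟨hw, not_zh_le_elt⟩
        exact hcov.2 h1 h2
      have h3 := hQ.rk_maxS a haS hmax
      show r = ρ a + 1
      omega
    · -- elt ⋖ top
      have haS : a ∉ S := by
        intro haS
        have h1 : (NEC.elt a : NEC L) < NEC.zh := ⟨haS, not_zh_le_elt⟩
        have h2 : (NEC.zh : NEC L) < NEC.top := ⟨trivial, not_top_le_zh⟩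
        exact hcov.2 h1 h2
      have hmax : ∀ w, a ≤ w → w = a := by
        intro w hle
        by_contra hne
        have h1 : (NEC.elt a : NEC L) < NEC.elt w :=
          ⟨hle, fun h => hne (le_antisymm (h : w ≤ a) hle)⟩
        have h2 : (NEC.elt w : NEC L) < NEC.top := ⟨trivial, not_top_le_elt⟩
        exact hcov.2 h1 h2
      have h3 := hQ.rk_maxB a haS hmax
      show r + 1 = ρ a + 1
      omega
    · exact absurd hcov.1.le not_zh_le_elt
    · exact absurd hcov.1 (lt_irrefl _)
    · show r + 1 = r + 1
      rfl
    · exact absurd hcov.1.le not_top_le_elt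
    · exact absurd hcov.1.le not_top_le_zh
    · exact absurd hcov.1 (lt_irrefl _)
  -- decomposition of sums over `NEC L`
  have hconv : ∀ (P : NEC L → Prop) (g : NEC L → ℚ),
      csum P g = csum (fun b => P (.elt b)) (fun b => g (.elt b))
        + ((if P .zh then g .zh else 0) + (if P .top then g .top else 0)) := by
    intro P g
    rw [csum_equiv (necEquiv : B ⊕ Bool ≃ NEC L) P g, csum_sum_type, csum_bool]
    rfl
  -- interval sums
  have hsum : ∀ z z' : NEC L, z < z' → intervalEulerSum ρE z z' = 0 := by
    intro z z' hlt
    rw [intervalEulerSum, finsum_eq_csum]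
    show csum (fun w => z ≤ w ∧ w ≤ z') (fun w => m1 (ρE w)) = 0
    rcases z' with b' | - | -
    · rcases z with a | - | -
      · have hab : a < b' := lt_of_le_of_ne hlt.le
          (fun h => hlt.ne (congrArg NEC.elt h))
        have h2 : csum (fun b : B => (NEC.elt a : NEC L) ≤ NEC.elt b ∧
            (NEC.elt b : NEC L) ≤ NEC.elt b') (fun b => m1 (ρ b)) = 0 := by
          have h1 := hB.2.2 a b' hab
          rw [intervalEulerSum, finsum_eq_csum] at h1
          exact h1
        rw [hconv, if_neg (fun h => not_zh_le_elt h.2), if_neg (fun h => not_top_le_elt h.2)]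
        simp only [hρE, nrank_elt]
        rw [h2]
        ring
      · exact absurd hlt.le not_zh_le_elt
      · exact absurd hlt.le not_top_le_elt
    · rcases z with a | - | -
      · have haS : a ∈ S := hlt.le
        have h2 : csum (fun b : B => (NEC.elt a : NEC L) ≤ NEC.elt b ∧
            (NEC.elt b : NEC L) ≤ NEC.zh) (fun b => m1 (ρ b)) = m1 (r + 1) :=
          hQ.bsum a haS
        rw [hconv, if_pos ⟨haS, le_rfl⟩, if_neg (fun h => not_top_le_zh h.2)]
        simp only [hρE, nrank_elt, nrank_zh]
        rw [h2, m1_succ]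
        ring
      · exact absurd hlt (lt_irrefl _)
      · exact absurd hlt.le not_top_le_zh
    · rcases z with a | - | -
      · have h2 : csum (fun b : B => (NEC.elt a : NEC L) ≤ NEC.elt b ∧
            (NEC.elt b : NEC L) ≤ NEC.top) (fun b => m1 (ρ b)) = Fup ρ a :=
          csum_congr (fun b => ⟨fun h => h.1, fun h => ⟨h, le_top' _⟩⟩) _
        by_cases haS : a ∈ S
        · rw [hconv, if_pos ⟨haS, le_top' _⟩, if_pos ⟨le_top' _, le_rfl⟩]
          simp only [hρE, nrank_elt, nrank_zh, nrank_top]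
          rw [h2, hQ.fs_mem a haS, m1_succ]
          ring
        · rw [hconv, if_neg (fun h => haS h.1), if_pos ⟨le_top' _, le_rfl⟩]
          simp only [hρE, nrank_elt, nrank_top]
          rw [h2, hQ.fs_not a haS, m1_succ]
          ring
      · rw [hconv, if_pos ⟨le_rfl, le_top' _⟩, if_pos ⟨le_top' _, le_rfl⟩]
        simp only [hρE, nrank_zh, nrank_top]
        rw [csum_empty (fun b h => not_zh_le_elt h.1), m1_succ]
        ring
      · exact absurd hlt (lt_irrefl _)
  -- least element
  obtain ⟨b0, hb0⟩ := hB.2.1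
  have hleast : ∀ z : NEC L, NEC.elt b0 ≤ z := by
    intro z
    cases z
    · exact hb0 _
    · exact hQ.least_mem b0 hb0
    · exact le_top' _
  -- assemble
  refine nearEulerian_of_data ρE NEC.top NEC.zh
    ⟨⟨hrk, ⟨NEC.elt b0, hleast⟩, hsum⟩, ⟨NEC.top, le_top'⟩⟩ le_top'
    (fun h => nomatch h) ?_ ?_
  · intro w hw
    cases w
    · exact absurd hw not_zh_le_elt
    · exact Or.inl rfl
    · exact Or.inr rfl
  · let inv : {w : NEC L // w ≠ NEC.top ∧ w ≠ NEC.zh} → B := fun w =>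
      match w with
      | ⟨NEC.elt a, _⟩ => a
      | ⟨NEC.zh, h⟩ => absurd rfl h.2
      | ⟨NEC.top, h⟩ => absurd rfl h.1
    have hcond : ∀ b : B, (NEC.elt b : NEC L) ≠ NEC.top ∧ (NEC.elt b : NEC L) ≠ NEC.zh :=
      fun b => ⟨fun h => (nomatch h), fun h => (nomatch h)⟩
    refine { toFun := fun b => ⟨NEC.elt b, hcond b⟩
             invFun := inv
             left_inv := fun b => rfl
             right_inv := fun w => ?_
             map_rel_iff' := fun {a b} => Iff.rfl }
    obtain ⟨w, hw⟩ := w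
    cases w
    · rfl
    · exact absurd rfl hw.2
    · exact absurd rfl hw.1

end Reconstruct

/-- For a strong formal subdivision `σ : X → Y` between finite lower
Eulerian posets, `X` is near-Eulerian iff `Y` is near-Eulerian; and in that case
`σ⁻¹(∂Y) = ∂X`. -/
theorem nearEulerian_iff_and_boundary {X Y : Type*} [PartialOrder X] [PartialOrder Y]
    [Finite X] [Finite Y]
    (ρX : X → ℤ) (ρY : Y → ℤ)
    (hX : LowerEulerian ρX) (hY : LowerEulerian ρY)
    (σ : X → Y) (hσ : StrongFormalSubdivision ρX ρY σ) :
    (NearEulerian X ↔ NearEulerian Y) ∧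
    (NearEulerian X → NearEulerian Y → σ ⁻¹' posetBoundary Y = posetBoundary X) := by
  haveI : Fintype X := Fintype.ofFinite X
  haveI : Fintype Y := Fintype.ofFinite Y
  obtain ⟨bX, hbX⟩ := hX.2.1
  constructor
  · constructor
    · intro hNE
      obtain ⟨r, S, hQ⟩ := NearEulerian.exists_qdat hX hNE
      obtain ⟨hQY, -⟩ := hQ.pushforward hσ hX.1 hbX
      exact hQY.nearEulerian hY
    · intro hNE
      obtain ⟨r, S', hQ⟩ := NearEulerian.exists_qdat hY hNE
      exact (hQ.pullback hσ).nearEulerian hX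
  · intro hNEX _
    obtain ⟨r, S, hQ⟩ := NearEulerian.exists_qdat hX hNEX
    obtain ⟨hQY, hpre⟩ := hQ.pushforward hσ hX.1 hbX
    rw [QDat.boundary_eq hY.1 hQY, QDat.boundary_eq hX.1 hQ]
    exact hpre

end SFSPaper
end
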